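/- arXiv:1811.12183 — 7 statements merged into one kernel-verified Lean document; each statement's English description precedes it below -/
import Mathlib

section
/- Let n ≥ 2 and let Sₙ be the sample standard deviation of n i.i.d. samples from a normal distribution N(μ, σ²) with σ > 0. Then for every x > 0, P(Sₙ ≥ σ + x) ≤ exp(−(n−1)x²/(4σ²)). -/
open MeasureTheory ProbabilityTheory Real

/-- Sample mean of the first `n` samples. -/
noncomputable def sampleMean {Ω : Type*} (X : ℕ → Ω → ℝ) (n : ℕ) (ω : Ω) : ℝ :=
  (∑ i ∈ Finset.range n, X i ω) / n

/-- Sample variance of the first `n` samples. -/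
noncomputable def sampleVar {Ω : Type*} (X : ℕ → Ω → ℝ) (n : ℕ) (ω : Ω) : ℝ :=
  (∑ i ∈ Finset.range n, (X i ω - sampleMean X n ω) ^ 2) / ((n : ℝ) - 1)

/-- Sample standard deviation of the first `n` samples. -/
noncomputable def sampleStd {Ω : Type*} (X : ℕ → Ω → ℝ) (n : ℕ) (ω : Ω) : ℝ :=
  Real.sqrt (sampleVar X n ω)


open scoped ENNReal NNReal


/-- Gaussian integral with a linear term. -/
lemma integral_exp_quad (b t : ℝ) (hb : 0 < b) :
    ∫ y : ℝ, Real.exp (-b * y ^ 2 + t * y) = Real.sqrt (π / b) * Real.exp (t ^ 2 / (4 * b)) := by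
  have key : ∀ y : ℝ, Real.exp (-b * y ^ 2 + t * y)
      = Real.exp (t ^ 2 / (4 * b)) * Real.exp (-b * (y - t / (2 * b)) ^ 2) := by
    intro y
    rw [← Real.exp_add]
    congr 1
    field_simp
    ring
  simp_rw [key]
  rw [integral_const_mul, integral_sub_right_eq_self (fun y => Real.exp (-b * y ^ 2)) (t / (2 * b)),
    integral_gaussian]
  ring

lemma integrable_exp_quad (b t : ℝ) (hb : 0 < b) :
    Integrable (fun y : ℝ => Real.exp (-b * y ^ 2 + t * y)) := by
  have key : ∀ y : ℝ, Real.exp (-b * y ^ 2 + t * y)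
      = Real.exp (t ^ 2 / (4 * b)) * Real.exp (-b * (y - t / (2 * b)) ^ 2) := by
    intro y
    rw [← Real.exp_add]
    congr 1
    field_simp
    ring
  simp_rw [key]
  exact ((integrable_exp_neg_mul_sq hb).comp_sub_right (t / (2 * b))).const_mul _

/-- MGF-type lintegral of `exp (s y² + t y)` against a centered Gaussian. -/
lemma lintegral_exp_quad_gaussian (v : ℝ) (hv : 0 < v) (s t : ℝ) (hs : 2 * s * v < 1) :
    ∫⁻ y, ENNReal.ofReal (Real.exp (s * y ^ 2 + t * y)) ∂(gaussianReal 0 v.toNNReal)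
      = ENNReal.ofReal ((Real.sqrt (1 - 2 * s * v))⁻¹
          * Real.exp (t ^ 2 * v / (2 * (1 - 2 * s * v)))) := by
  have hv' : v.toNNReal ≠ 0 := by simp [Real.toNNReal_eq_zero, hv, not_le.2 hv]
  have hvc : ((v.toNNReal : ℝ)) = v := Real.coe_toNNReal v hv.le
  rw [gaussianReal_of_var_ne_zero _ hv']
  rw [lintegral_withDensity_eq_lintegral_mul _ (measurable_gaussianPDF _ _)
    (by fun_prop)]
  have hb : 0 < 1 / (2 * v) - s := by
    rw [sub_pos, lt_div_iff₀ (by linarith)]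
    linarith
  set b : ℝ := 1 / (2 * v) - s with hbdef
  have hpdf : ∀ y : ℝ, (gaussianPDF 0 v.toNNReal y
        * ENNReal.ofReal (Real.exp (s * y ^ 2 + t * y)))
      = ENNReal.ofReal ((Real.sqrt (2 * π * v))⁻¹ * Real.exp (-b * y ^ 2 + t * y)) := by
    intro y
    rw [gaussianPDF, ← ENNReal.ofReal_mul (gaussianPDFReal_nonneg _ _ _)]
    congr 1
    rw [gaussianPDFReal, hvc]
    rw [mul_assoc, ← Real.exp_add]
    congr 2
    rw [hbdef]
    rw [div_eq_mul_inv, div_eq_mul_inv]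
    ring
  calc ∫⁻ y, (gaussianPDF 0 v.toNNReal * fun y => ENNReal.ofReal (Real.exp (s * y ^ 2 + t * y))) y
      = ∫⁻ y, ENNReal.ofReal ((Real.sqrt (2 * π * v))⁻¹ * Real.exp (-b * y ^ 2 + t * y)) := by
        refine lintegral_congr fun y => ?_
        exact hpdf y
    _ = ENNReal.ofReal (∫ y : ℝ, (Real.sqrt (2 * π * v))⁻¹ * Real.exp (-b * y ^ 2 + t * y)) := by
        rw [ofReal_integral_eq_lintegral_ofReal ((integrable_exp_quad b t hb).const_mul _)
          (Filter.Eventually.of_forall fun y => by positivity)]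
    _ = ENNReal.ofReal ((Real.sqrt (1 - 2 * s * v))⁻¹
          * Real.exp (t ^ 2 * v / (2 * (1 - 2 * s * v)))) := by
        rw [integral_const_mul, integral_exp_quad b t hb]
        have hd : (0:ℝ) < 1 - 2 * s * v := by linarith
        have hb2 : b = (1 - 2 * s * v) / (2 * v) := by
          rw [hbdef]; field_simp
        have h1 : π / b = (2 * π * v) * (1 - 2 * s * v)⁻¹ := by
          rw [hb2, div_div_eq_mul_div, div_eq_mul_inv]
          ring
        have hb4 : 4 * b = 2 * (1 - 2 * s * v) / v := by
          rw [hbdef]; field_simp; ring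
        have e1 : t ^ 2 / (4 * b) = t ^ 2 * v / (2 * (1 - 2 * s * v)) := by
          rw [hb4, div_div_eq_mul_div]
        have e2 : Real.sqrt (π / b) = Real.sqrt (2 * π * v) * (Real.sqrt (1 - 2 * s * v))⁻¹ := by
          rw [h1, Real.sqrt_mul (by positivity), Real.sqrt_inv]
        rw [e1, e2, ← mul_assoc, ← mul_assoc, inv_mul_cancel₀ (by positivity), one_mul]

lemma pi_lintegral_exp (v : ℝ) (hv : 0 < v) :
    ∀ (n : ℕ) (lam c : ℝ), 2 * lam * v < 1 → 2 * (lam + ((n : ℝ) + 1) * c) * v < 1 →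
    ∫⁻ y : Fin (n + 1) → ℝ,
        ENNReal.ofReal (Real.exp (lam * ∑ i, y i ^ 2 + c * (∑ i, y i) ^ 2))
        ∂(Measure.pi fun _ => gaussianReal 0 v.toNNReal)
      = ENNReal.ofReal ((Real.sqrt (1 - 2 * lam * v))⁻¹ ^ n
          * (Real.sqrt (1 - 2 * (lam + ((n : ℝ) + 1) * c) * v))⁻¹) := by
  intro n
  induction n with
  | zero =>
    intro lam c h1 h2
    have h2' : 2 * (lam + c) * v < 1 := by push_cast at h2; linarith
    have hG : Measurable (fun z : ℝ => ENNReal.ofReal (Real.exp ((lam + c) * z ^ 2 + 0 * z))) := by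
      fun_prop
    calc ∫⁻ y : Fin 1 → ℝ,
          ENNReal.ofReal (Real.exp (lam * ∑ i, y i ^ 2 + c * (∑ i, y i) ^ 2))
          ∂(Measure.pi fun _ => gaussianReal 0 v.toNNReal)
        = ∫⁻ z, ENNReal.ofReal (Real.exp ((lam + c) * z ^ 2 + 0 * z))
            ∂(gaussianReal 0 v.toNNReal) := by
          rw [← (measurePreserving_funUnique (gaussianReal 0 v.toNNReal) (Fin 1)).lintegral_comp
            hG]
          refine lintegral_congr fun y => ?_
          simp only [Fin.sum_univ_one, MeasurableEquiv.funUnique_apply]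
          congr 2
          have hd : (default : Fin 1) = 0 := rfl
          rw [hd]
          ring
      _ = ENNReal.ofReal ((Real.sqrt (1 - 2 * lam * v))⁻¹ ^ 0
            * (Real.sqrt (1 - 2 * (lam + ((0 : ℕ) + 1 : ℝ) * c) * v))⁻¹) := by
          rw [lintegral_exp_quad_gaussian v hv _ _ h2']
          norm_num
  | succ n ih =>
    intro lam c h1 h2
    push_cast at h2 ⊢
    rw [show ((n : ℝ) + 1 + 1) = (n : ℝ) + 2 from by ring] at h2 ⊢
    set L : ℝ := 1 - 2 * lam * v with hL
    set R : ℝ := 1 - 2 * (lam + ((n : ℝ) + 2) * c) * v with hR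
    have hLpos : 0 < L := by rw [hL]; linarith
    have hRpos : 0 < R := by rw [hR]; linarith
    have hD : 2 * (lam + c) * v < 1 := by
      have hsum : ((n : ℝ) + 2) * (2 * (lam + c) * v)
          = ((n : ℝ) + 1) * (2 * lam * v) + 2 * (lam + ((n : ℝ) + 2) * c) * v := by ring
      nlinarith [show (0:ℝ) < (n : ℝ) + 2 by positivity, show (0:ℝ) ≤ (n:ℝ) + 1 by positivity]
    set D : ℝ := 1 - 2 * (lam + c) * v with hDdef
    have hDpos : 0 < D := by rw [hDdef]; linarith
    set c' : ℝ := c + 2 * c ^ 2 * v / D with hc'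
    have hDne : (1 : ℝ) - 2 * (lam + c) * v ≠ 0 := by rw [← hDdef]; exact hDpos.ne'
    have hkey : 1 - 2 * (lam + ((n : ℝ) + 1) * c') * v = L * R / D := by
      rw [hc', hL, hR, eq_div_iff hDpos.ne']
      have hcd : 2 * c ^ 2 * v / D * D = 2 * c ^ 2 * v := div_mul_cancel₀ _ hDpos.ne'
      linear_combination (-2 * ((n:ℝ) + 1) * v) * hcd + (1 - 2 * (lam + ((n:ℝ) + 1) * c) * v) * hDdef
    have hpos : 0 < L * R / D := by positivity
    have hc'lt : 2 * (lam + ((n : ℝ) + 1) * c') * v < 1 := by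
      have h0 : 0 < 1 - 2 * (lam + ((n : ℝ) + 1) * c') * v := by rw [hkey]; exact hpos
      linarith
    set e := MeasurableEquiv.piFinSuccAbove (fun _ : Fin (n + 2) => ℝ) 0 with he
    have mp := measurePreserving_piFinSuccAbove
      (fun _ : Fin (n + 2) => gaussianReal 0 v.toNNReal) 0
    set F : (Fin (n + 2) → ℝ) → ℝ≥0∞ := fun y =>
      ENNReal.ofReal (Real.exp (lam * ∑ i, y i ^ 2 + c * (∑ i, y i) ^ 2)) with hF
    have hFmeas : Measurable F := by
      apply Measurable.ennreal_ofReal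
      apply Measurable.exp
      apply Measurable.add
      · exact (Finset.measurable_sum _ fun i _ => (measurable_pi_apply i).pow_const 2).const_mul _
      · exact ((Finset.measurable_sum _ fun i _ => measurable_pi_apply i).pow_const 2).const_mul _
    have step1 : ∫⁻ y, F y ∂(Measure.pi fun _ => gaussianReal 0 v.toNNReal)
        = ∫⁻ p, F (e.symm p)
            ∂((gaussianReal 0 v.toNNReal).prod
              (Measure.pi fun _ : Fin (n + 1) => gaussianReal 0 v.toNNReal)) :=
      ((mp.symm e).lintegral_comp hFmeas).symm
    have hFsymm : ∀ (z : ℝ) (w : Fin (n + 1) → ℝ),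
        F (e.symm (z, w)) = ENNReal.ofReal (Real.exp (lam * ∑ j, w j ^ 2 + c * (∑ j, w j) ^ 2))
          * ENNReal.ofReal (Real.exp ((lam + c) * z ^ 2 + (2 * c * (∑ j, w j)) * z)) := by
      intro z w
      have h1s : ∑ i, (e.symm (z, w)) i ^ 2 = z ^ 2 + ∑ j, w j ^ 2 := by
        rw [Fin.sum_univ_succAbove (fun i => (e.symm (z, w)) i ^ 2) 0]
        simp [he, MeasurableEquiv.piFinSuccAbove_symm_apply]
      have h2s : ∑ i, (e.symm (z, w)) i = z + ∑ j, w j := by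
        rw [Fin.sum_univ_succAbove (fun i => (e.symm (z, w)) i) 0]
        simp [he, MeasurableEquiv.piFinSuccAbove_symm_apply]
      show ENNReal.ofReal (Real.exp (lam * ∑ i, (e.symm (z, w)) i ^ 2
          + c * (∑ i, (e.symm (z, w)) i) ^ 2)) = _
      rw [h1s, h2s, ← ENNReal.ofReal_mul (Real.exp_nonneg _), ← Real.exp_add]
      congr 2
      ring
    rw [step1, lintegral_prod_symm' _
      (show Measurable fun p : ℝ × (Fin (n + 1) → ℝ) => F (e.symm p) from
        hFmeas.comp e.symm.measurable)]
    have inner : ∀ w : Fin (n + 1) → ℝ,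
        ∫⁻ z, F (e.symm (z, w)) ∂(gaussianReal 0 v.toNNReal)
          = ENNReal.ofReal ((Real.sqrt D)⁻¹)
            * ENNReal.ofReal (Real.exp (lam * ∑ j, w j ^ 2 + c' * (∑ j, w j) ^ 2)) := by
      intro w
      simp_rw [hFsymm]
      rw [lintegral_const_mul' _ _ ENNReal.ofReal_ne_top,
        lintegral_exp_quad_gaussian v hv _ _ hD, ← hDdef,
        ← ENNReal.ofReal_mul (Real.exp_nonneg _),
        ← ENNReal.ofReal_mul (by positivity : (0:ℝ) ≤ (Real.sqrt D)⁻¹)]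
      congr 1
      rw [mul_left_comm, ← Real.exp_add]
      congr 2
      rw [hc']
      field_simp
      ring
    simp_rw [inner]
    rw [lintegral_const_mul' _ _ ENNReal.ofReal_ne_top, ih lam c' h1 hc'lt, ← hL, hkey,
      ← ENNReal.ofReal_mul (by positivity)]
    congr 1
    have hsq : Real.sqrt (L * R / D) = Real.sqrt L * Real.sqrt R / Real.sqrt D := by
      rw [Real.sqrt_div (by positivity) D, Real.sqrt_mul hLpos.le]
    have s1 : (0:ℝ) < Real.sqrt L := Real.sqrt_pos.2 hLpos
    have s2 : (0:ℝ) < Real.sqrt R := Real.sqrt_pos.2 hRpos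
    have s3 : (0:ℝ) < Real.sqrt D := Real.sqrt_pos.2 hDpos
    rw [hsq, pow_succ]
    field_simp

lemma map_fin_eq_pi {Ω : Type*} [MeasurableSpace Ω] (P : Measure Ω) [IsProbabilityMeasure P]
    (Y : ℕ → Ω → ℝ) (hmeas : ∀ i, Measurable (Y i))
    (hindep : iIndepFun Y P) (ν : Measure ℝ)
    [IsProbabilityMeasure ν] (hdist : ∀ i, Measure.map (Y i) P = ν) (n : ℕ) :
    Measure.map (fun ω (i : Fin n) => Y i ω) P = Measure.pi (fun _ : Fin n => ν) := by
  refine (Measure.pi_eq fun s hs => ?_).symm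
  have hvec : Measurable (fun ω (i : Fin n) => Y i ω) :=
    measurable_pi_lambda _ fun i => hmeas i
  rw [Measure.map_apply hvec (MeasurableSet.univ_pi hs)]
  set sets : ℕ → Set ℝ := fun k => if h : k < n then s ⟨k, h⟩ else Set.univ with hsets
  have hpre : (fun ω (i : Fin n) => Y i ω) ⁻¹' (Set.univ.pi s)
      = ⋂ k ∈ Finset.range n, Y k ⁻¹' sets k := by
    ext ω
    simp only [Set.mem_preimage, Set.mem_univ_pi, Set.mem_iInter, Finset.mem_range, hsets,
      Set.mem_preimage]
    constructor
    · intro h k hk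
      simp only [dif_pos hk]
      exact h ⟨k, hk⟩
    · intro h i
      have := h i.1 i.2
      simpa only [dif_pos i.2] using this
  rw [hpre, hindep.measure_inter_preimage_eq_mul (Finset.range n) (fun k hk => by
    simp only [hsets]
    rw [dif_pos (Finset.mem_range.mp hk)]
    exact hs _)]
  rw [← Fin.prod_univ_eq_prod_range (fun k => P (Y k ⁻¹' sets k)) n]
  refine Finset.prod_congr rfl fun i _ => ?_
  have : P (Y i ⁻¹' sets i) = (Measure.map (Y i) P) (sets i) := by
    rw [Measure.map_apply (hmeas i)]
    simp only [hsets]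
    split
    · exact (hs _)
    · exact MeasurableSet.univ
  rw [this, hdist]
  congr 1
  simp only [hsets]
  rw [dif_pos i.2]

lemma sum_sub_sq (m : ℕ) (f : ℕ → ℝ) (b : ℝ) :
    ∑ i ∈ Finset.range m, (f i - b) ^ 2
      = ∑ i ∈ Finset.range m, f i ^ 2 - 2 * b * ∑ i ∈ Finset.range m, f i + m * b ^ 2 := by
  have h : ∀ i ∈ Finset.range m, (f i - b) ^ 2 = f i ^ 2 - 2 * b * f i + b ^ 2 :=
    fun i _ => by ring
  rw [Finset.sum_congr rfl h, Finset.sum_add_distrib, Finset.sum_sub_distrib, ← Finset.mul_sum,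
    Finset.sum_const, Finset.card_range, nsmul_eq_mul]

theorem std_right_tail_bound
    {Ω : Type*} [MeasurableSpace Ω] (P : Measure Ω) [IsProbabilityMeasure P]
    (X : ℕ → Ω → ℝ) (μ σ : ℝ) (hσ : 0 < σ)
    (hmeas : ∀ i, Measurable (X i))
    (hindep : iIndepFun X P)
    (hdist : ∀ i, Measure.map (X i) P = gaussianReal μ (Real.toNNReal (σ ^ 2)))
    (n : ℕ) (hn : 2 ≤ n) (x : ℝ) (hx : 0 < x) :
    P {ω | σ + x ≤ sampleStd X n ω} ≤
      ENNReal.ofReal (Real.exp (-(((n : ℝ) - 1) * x ^ 2) / (4 * σ ^ 2))) := by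
  -- setup
  set v : ℝ := σ ^ 2 with hvdef
  have hv : 0 < v := by positivity
  have hσx : 0 < σ + x := by linarith
  have hnR : (0 : ℝ) < n := by positivity
  have hnne : (n : ℝ) ≠ 0 := by
    have : (0:ℕ) < n := by omega
    exact_mod_cast this.ne'
  have hn1 : (1 : ℝ) ≤ (n : ℝ) - 1 := by
    have : (2 : ℝ) ≤ (n : ℝ) := by exact_mod_cast hn
    linarith
  -- centered variables
  set Y : ℕ → Ω → ℝ := fun i ω => X i ω - μ with hY
  have hYmeas : ∀ i, Measurable (Y i) := fun i => (hmeas i).sub_const μ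
  have hYindep : iIndepFun Y P := by
    have := hindep.comp (fun _ => fun z : ℝ => z - μ) (fun _ => measurable_id.sub_const μ)
    exact this
  have hYdist : ∀ i, Measure.map (Y i) P = gaussianReal 0 v.toNNReal := by
    intro i
    have h1 : Y i = (fun z : ℝ => z + (-μ)) ∘ X i := by
      funext ω; simp [hY, sub_eq_add_neg]
    rw [h1, ← Measure.map_map (measurable_add_const (-μ)) (hmeas i), hdist i,
      gaussianReal_map_add_const]
    simp [hvdef]
  -- parameters
  set lam : ℝ := ((σ + x) ^ 2 - σ ^ 2) / (2 * σ ^ 2 * (σ + x) ^ 2) with hlam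
  have hlampos : 0 < lam := by
    apply div_pos
    · nlinarith
    · positivity
  have hLval : 1 - 2 * lam * v = (σ / (σ + x)) ^ 2 := by
    rw [hlam, hvdef]
    field_simp
    ring
  have h2lam : 2 * lam * v < 1 := by
    nlinarith [hLval, sq_nonneg (σ / (σ + x)), div_pos hσ hσx]
  set c : ℝ := -lam / n with hc
  have hc0 : lam + (n : ℝ) * c = 0 := by
    rw [hc]
    field_simp
    ring
  -- the statistic
  set T : Ω → ℝ := fun ω => ∑ i ∈ Finset.range n, (X i ω - sampleMean X n ω) ^ 2 with hT
  have hTid : ∀ ω, lam * T ω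
      = lam * ∑ i ∈ Finset.range n, Y i ω ^ 2 + c * (∑ i ∈ Finset.range n, Y i ω) ^ 2 := by
    intro ω
    have e1 : T ω = ∑ i ∈ Finset.range n, (X i ω) ^ 2
        - (∑ i ∈ Finset.range n, X i ω) ^ 2 / n := by
      rw [hT]
      simp only
      rw [sum_sub_sq n (fun i => X i ω) (sampleMean X n ω)]
      rw [sampleMean]
      field_simp
      ring
    have e2 : ∑ i ∈ Finset.range n, Y i ω ^ 2
        = ∑ i ∈ Finset.range n, (X i ω) ^ 2 - 2 * μ * ∑ i ∈ Finset.range n, X i ω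
          + n * μ ^ 2 := by
      simpa [hY] using sum_sub_sq n (fun i => X i ω) μ
    have e3 : ∑ i ∈ Finset.range n, Y i ω = ∑ i ∈ Finset.range n, X i ω - n * μ := by
      simp [hY, Finset.sum_sub_distrib]
    rw [e1, e2, e3, hc]
    field_simp
    ring
  -- measurability
  have hmean : Measurable (sampleMean X n) :=
    (Finset.measurable_sum _ fun i _ => hmeas i).div_const _
  have hTmeas : Measurable T :=
    Finset.measurable_sum _ fun i _ => ((hmeas i).sub hmean).pow_const 2
  set a : ℝ := ((n : ℝ) - 1) * (σ + x) ^ 2 with ha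
  set f : Ω → ℝ≥0∞ := fun ω => ENNReal.ofReal (Real.exp (lam * T ω)) with hf
  have hfmeas : Measurable f := (hTmeas.const_mul lam).exp.ennreal_ofReal
  set ε : ℝ≥0∞ := ENNReal.ofReal (Real.exp (lam * a)) with hε
  -- event inclusion
  have hsubset : {ω | σ + x ≤ sampleStd X n ω} ⊆ {ω | ε ≤ f ω} := by
    intro ω hω
    simp only [Set.mem_setOf_eq] at hω ⊢
    have hTnn : 0 ≤ T ω := Finset.sum_nonneg fun i _ => sq_nonneg _
    have hVnn : 0 ≤ sampleVar X n ω := by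
      rw [sampleVar]
      positivity
    have h1 : (σ + x) ^ 2 ≤ sampleVar X n ω := by
      have := pow_le_pow_left₀ hσx.le hω 2
      rwa [sampleStd, Real.sq_sqrt hVnn] at this
    have hpos : (0:ℝ) < (n : ℝ) - 1 := by linarith
    have h2 : a ≤ T ω := by
      rw [sampleVar, le_div_iff₀ hpos] at h1
      rw [ha]
      calc ((n:ℝ) - 1) * (σ + x) ^ 2 = (σ + x) ^ 2 * ((n:ℝ) - 1) := by ring
        _ ≤ ∑ i ∈ Finset.range n, (X i ω - sampleMean X n ω) ^ 2 := h1
        _ = T ω := by rw [hT]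
    rw [hε, hf]
    exact ENNReal.ofReal_le_ofReal (Real.exp_le_exp.2 (by nlinarith [hlampos.le]))
  -- Markov
  have hmarkov : ε * P {ω | ε ≤ f ω} ≤ ∫⁻ ω, f ω ∂P :=
    mul_meas_ge_le_lintegral₀ hfmeas.aemeasurable ε
  have hPle : P {ω | σ + x ≤ sampleStd X n ω} ≤ P {ω | ε ≤ f ω} := measure_mono hsubset
  -- compute the lintegral
  obtain ⟨k, rfl⟩ : ∃ k, n = k + 1 := ⟨n - 1, by omega⟩
  have hkcast : ((k : ℝ) + 1) = ((k + 1 : ℕ) : ℝ) := by push_cast; ring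
  set G : (Fin (k + 1) → ℝ) → ℝ≥0∞ := fun y =>
    ENNReal.ofReal (Real.exp (lam * ∑ i, y i ^ 2 + c * (∑ i, y i) ^ 2)) with hG
  have hGmeas : Measurable G := by
    apply Measurable.ennreal_ofReal
    apply Measurable.exp
    exact ((Finset.measurable_sum _ fun i _ =>
        (measurable_pi_apply i).pow_const 2).const_mul _).add
      (((Finset.measurable_sum _ fun i _ => measurable_pi_apply i).pow_const 2).const_mul _)
  have hvec : Measurable (fun ω (i : Fin (k + 1)) => Y i ω) :=
    measurable_pi_lambda _ fun i => hYmeas i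
  have hlint : ∫⁻ ω, f ω ∂P = ENNReal.ofReal (((σ + x) / σ) ^ k) := by
    have step1 : ∀ ω, f ω = G (fun i : Fin (k + 1) => Y i ω) := by
      intro ω
      rw [hf, hG]
      simp only
      congr 2
      rw [hTid ω]
      rw [Fin.sum_univ_eq_sum_range (fun i => Y i ω ^ 2) (k + 1),
        Fin.sum_univ_eq_sum_range (fun i => Y i ω) (k + 1)]
    calc ∫⁻ ω, f ω ∂P = ∫⁻ ω, G (fun i : Fin (k + 1) => Y i ω) ∂P := lintegral_congr step1
      _ = ∫⁻ y, G y ∂(Measure.map (fun ω (i : Fin (k + 1)) => Y i ω) P) :=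
          (lintegral_map hGmeas hvec).symm
      _ = ∫⁻ y, G y ∂(Measure.pi fun _ : Fin (k + 1) => gaussianReal 0 v.toNNReal) := by
          rw [map_fin_eq_pi P Y hYmeas hYindep _ hYdist]
      _ = ENNReal.ofReal ((Real.sqrt (1 - 2 * lam * v))⁻¹ ^ k
            * (Real.sqrt (1 - 2 * (lam + ((k : ℝ) + 1) * c) * v))⁻¹) := by
          rw [hG]
          exact pi_lintegral_exp v hv k lam c h2lam
            (by rw [hkcast, hc0]; norm_num)
      _ = ENNReal.ofReal (((σ + x) / σ) ^ k) := by
          rw [hkcast, hc0]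
          norm_num
          rw [hLval, Real.sqrt_sq (by positivity), ← inv_pow, inv_div]
  -- conclude
  have hεpos : ε ≠ 0 := by
    rw [hε]
    exact (ENNReal.ofReal_pos.2 (Real.exp_pos _)).ne'
  have hεtop : ε ≠ ⊤ := ENNReal.ofReal_ne_top
  have hbound : P {ω | σ + x ≤ sampleStd X (k + 1) ω} ≤ (∫⁻ ω, f ω ∂P) / ε := by
    rw [ENNReal.le_div_iff_mul_le (Or.inl hεpos) (Or.inl hεtop)]
    calc P {ω | σ + x ≤ sampleStd X (k + 1) ω} * ε = ε * P {ω | σ + x ≤ sampleStd X (k + 1) ω} :=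
          mul_comm _ _
      _ ≤ ε * P {ω | ε ≤ f ω} := mul_le_mul_right hPle _
      _ ≤ ∫⁻ ω, f ω ∂P := hmarkov
  refine hbound.trans ?_
  rw [hlint, hε, ← ENNReal.ofReal_div_of_pos (Real.exp_pos _)]
  apply ENNReal.ofReal_le_ofReal
  -- the real inequality
  have hk1 : ((k + 1 : ℕ) : ℝ) - 1 = (k : ℝ) := by push_cast; ring
  rw [hk1]
  have hrpos : (0:ℝ) < (σ + x) / σ := by positivity
  have hpow : ((σ + x) / σ) ^ k = Real.exp ((k : ℝ) * Real.log ((σ + x) / σ)) := by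
    rw [← Real.log_pow, Real.exp_log (by positivity)]
  rw [hpow, div_eq_mul_inv, ← Real.exp_neg, ← Real.exp_add, Real.exp_le_exp]
  have hlog : Real.log ((σ + x) / σ) ≤ x / σ := by
    have h1 : (σ + x) / σ = 1 + x / σ := by field_simp
    have h2 := Real.log_le_sub_one_of_pos hrpos
    rw [h1] at h2 ⊢
    linarith
  have hlama : lam * a = (k : ℝ) * (x / σ) + (k : ℝ) * x ^ 2 / (2 * σ ^ 2) := by
    rw [hlam, ha, hk1]
    field_simp
    ring
  have hklog : (k : ℝ) * Real.log ((σ + x) / σ) ≤ (k : ℝ) * (x / σ) :=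
    mul_le_mul_of_nonneg_left hlog (by positivity)
  have hq : (0:ℝ) ≤ (k : ℝ) * x ^ 2 / (4 * σ ^ 2) := by positivity
  have hhalf : (k : ℝ) * x ^ 2 / (2 * σ ^ 2) = 2 * ((k : ℝ) * x ^ 2 / (4 * σ ^ 2)) := by
    field_simp
    ring
  have hgoal : -((k : ℝ) * x ^ 2) / (4 * σ ^ 2) = -((k : ℝ) * x ^ 2 / (4 * σ ^ 2)) := by ring
  rw [hgoal]
  linarith [hklog, hlama, hq, hhalf]
end

section
/- Let X₁, X₂, … be i.i.d. samples from N(μ, σ²) with σ > 0, and for n ≥ 2 let Sₙ be the sample standard deviation of the first n samples. Then for every c > 0 there exists ε̄ ∈ (0, σ) such that ∑_{n ≥ 2} P(Sₙ ≤ σ − ε̄) ≤ c. -/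
open MeasureTheory ProbabilityTheory Real
open scoped NNReal ENNReal

lemma pair_sum_le (a : ℕ → ℝ) (c : ℝ) :
    ∀ m : ℕ, ∑ k ∈ Finset.range m, (a (2*k) - a (2*k+1))^2
      ≤ 2 * ∑ i ∈ Finset.range (2*m), (a i - c)^2 := by
  intro m
  induction m with
  | zero => simp
  | succ m ih =>
    rw [Finset.sum_range_succ, show 2*(m+1) = 2*m+1+1 by ring, Finset.sum_range_succ,
      Finset.sum_range_succ]
    nlinarith [sq_nonneg (a (2*m) + a (2*m+1) - 2*c)]


lemma factor_bound {Ω : Type*} [MeasurableSpace Ω] (P : Measure Ω) [IsProbabilityMeasure P]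
    (Y Z : Ω → ℝ) (hY : Measurable Y) (hZ : Measurable Z) (hind : IndepFun Y Z P)
    (μ : ℝ) (v : ℝ≥0) (hv : v ≠ 0)
    (hdY : Measure.map Y P = gaussianReal μ v) (hdZ : Measure.map Z P = gaussianReal μ v)
    (l : ℝ) (hl : 0 < l) :
    ∫⁻ ω, ENNReal.ofReal (rexp (-l * (Y ω - Z ω)^2)) ∂P
      ≤ ENNReal.ofReal ((Real.sqrt (2*π*v))⁻¹ * Real.sqrt (π/l)) := by
  have hmap : Measure.map (fun ω => (Y ω, Z ω)) P
      = (gaussianReal μ v).prod (gaussianReal μ v) := by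
    rw [(indepFun_iff_map_prod_eq_prod_map_map hY.aemeasurable hZ.aemeasurable).mp hind,
      hdY, hdZ]
  have hfm : Measurable (fun p : ℝ × ℝ => ENNReal.ofReal (rexp (-l * (p.1 - p.2)^2))) := by
    fun_prop
  have h1 : ∫⁻ ω, ENNReal.ofReal (rexp (-l * (Y ω - Z ω)^2)) ∂P
      = ∫⁻ p, ENNReal.ofReal (rexp (-l * (p.1 - p.2)^2))
          ∂((gaussianReal μ v).prod (gaussianReal μ v)) := by
    rw [← hmap, lintegral_map hfm (hY.prodMk hZ)]
  rw [h1, lintegral_prod _ hfm.aemeasurable]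
  -- inner integral bound
  have hinner : ∀ x : ℝ, ∫⁻ y, ENNReal.ofReal (rexp (-l * (x - y)^2)) ∂(gaussianReal μ v)
      ≤ ENNReal.ofReal ((Real.sqrt (2*π*v))⁻¹ * Real.sqrt (π/l)) := by
    intro x
    rw [gaussianReal_of_var_ne_zero _ hv,
      lintegral_withDensity_eq_lintegral_mul _ (measurable_gaussianPDF μ v) (by fun_prop)]
    have hbd : ∀ y : ℝ, gaussianPDF μ v y * ENNReal.ofReal (rexp (-l * (x - y)^2))
        ≤ ENNReal.ofReal ((Real.sqrt (2*π*v))⁻¹) * ENNReal.ofReal (rexp (-l * (x - y)^2)) := by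
      intro y
      refine mul_le_mul_left ?_ _
      refine ENNReal.ofReal_le_ofReal ?_
      rw [gaussianPDFReal]
      calc (√(2 * π * v))⁻¹ * rexp (- (y - μ)^2 / (2 * v))
          ≤ (√(2 * π * v))⁻¹ * 1 := by
            refine mul_le_mul_of_nonneg_left ?_ (by positivity)
            exact Real.exp_le_one_iff.mpr (div_nonpos_of_nonpos_of_nonneg (neg_nonpos.mpr (sq_nonneg _)) (by positivity))
        _ = (√(2 * π * v))⁻¹ := mul_one _
    calc ∫⁻ y, gaussianPDF μ v y * ENNReal.ofReal (rexp (-l * (x - y)^2))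
        ≤ ∫⁻ y, ENNReal.ofReal ((Real.sqrt (2*π*v))⁻¹) * ENNReal.ofReal (rexp (-l * (x - y)^2)) :=
          lintegral_mono hbd
      _ = ENNReal.ofReal ((Real.sqrt (2*π*v))⁻¹)
            * ∫⁻ y, ENNReal.ofReal (rexp (-l * (x - y)^2)) := lintegral_const_mul _ (by fun_prop)
      _ = ENNReal.ofReal ((Real.sqrt (2*π*v))⁻¹) * ENNReal.ofReal (Real.sqrt (π/l)) := by
          congr 1
          have hint : Integrable (fun y : ℝ => rexp (-l * (y - x)^2)) := by
            have := (integrable_exp_neg_mul_sq hl).comp_sub_right x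
            simpa using this
          have h3 : ∫⁻ y, ENNReal.ofReal (rexp (-l * (x - y)^2))
              = ∫⁻ y, ENNReal.ofReal (rexp (-l * (y - x)^2)) := by
            congr 1; funext y; rw [show (x - y)^2 = (y-x)^2 by ring]
          rw [h3, ← ofReal_integral_eq_lintegral_ofReal hint
            (Filter.Eventually.of_forall fun y => (Real.exp_pos _).le)]
          congr 1
          calc ∫ y : ℝ, rexp (-l * (y - x)^2)
              = ∫ y : ℝ, rexp (-l * y^2) := by
                exact integral_sub_right_eq_self (fun y => rexp (-l * y^2)) x
            _ = Real.sqrt (π / l) := integral_gaussian l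
      _ = ENNReal.ofReal ((Real.sqrt (2*π*v))⁻¹ * Real.sqrt (π/l)) := by
          rw [← ENNReal.ofReal_mul (by positivity)]
  calc ∫⁻ x, ∫⁻ y, ENNReal.ofReal (rexp (-l * (x - y)^2)) ∂(gaussianReal μ v) ∂(gaussianReal μ v)
      ≤ ∫⁻ _x, ENNReal.ofReal ((Real.sqrt (2*π*v))⁻¹ * Real.sqrt (π/l)) ∂(gaussianReal μ v) :=
        lintegral_mono hinner
    _ = ENNReal.ofReal ((Real.sqrt (2*π*v))⁻¹ * Real.sqrt (π/l)) := by simp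


lemma prod_bound {Ω : Type*} [MeasurableSpace Ω] (P : Measure Ω) [IsProbabilityMeasure P]
    (X : ℕ → Ω → ℝ) (hmeas : ∀ i, Measurable (X i))
    (hindep : iIndepFun X P)
    (l : ℝ) (B : ℝ≥0∞)
    (hB : ∀ i j : ℕ, i ≠ j → ∫⁻ ω, ENNReal.ofReal (rexp (-l * (X i ω - X j ω)^2)) ∂P ≤ B) :
    ∀ m : ℕ, ∫⁻ ω, ∏ k ∈ Finset.range m,
        ENNReal.ofReal (rexp (-l * (X (2*k) ω - X (2*k+1) ω)^2)) ∂P ≤ B ^ m := by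
  intro m
  induction m with
  | zero => simp
  | succ m ih =>
    set F : ℕ → Ω → ℝ≥0∞ :=
      fun k ω => ENNReal.ofReal (rexp (-l * (X (2*k) ω - X (2*k+1) ω)^2)) with hF
    have hFmeas : ∀ k, Measurable (F k) := by
      intro k; fun_prop
    have hGmeas : Measurable (fun ω => ∏ k ∈ Finset.range m, F k ω) :=
      Finset.measurable_prod _ fun k _ => hFmeas k
    -- independence of the partial product and the next factor
    have hST : Disjoint (Finset.range (2*m)) ({2*m, 2*m+1} : Finset ℕ) := by
      simp only [Finset.disjoint_left, Finset.mem_range, Finset.mem_insert, Finset.mem_singleton]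
      omega
    have hbase := hindep.indepFun_finset (Finset.range (2*m)) ({2*m, 2*m+1} : Finset ℕ) hST hmeas
    -- φ : tuple on range (2m) ↦ partial product
    set ext : ∀ (S : Finset ℕ), ({x // x ∈ S} → ℝ) → ℕ → ℝ :=
      fun S g i => if h : i ∈ S then g ⟨i, h⟩ else 0 with hext
    have hextmeas : ∀ (S : Finset ℕ) (i : ℕ), Measurable (fun g => ext S g i) := by
      intro S i
      simp only [hext]
      split
      · exact measurable_pi_apply _
      · exact measurable_const
    set φ : ({x // x ∈ Finset.range (2*m)} → ℝ) → ℝ≥0∞ :=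
      fun g => ∏ k ∈ Finset.range m,
        ENNReal.ofReal (rexp (-l * (ext (Finset.range (2*m)) g (2*k)
          - ext (Finset.range (2*m)) g (2*k+1))^2)) with hφ
    set ψ : ({x // x ∈ ({2*m, 2*m+1} : Finset ℕ)} → ℝ) → ℝ≥0∞ :=
      fun g => ENNReal.ofReal (rexp (-l * (ext ({2*m, 2*m+1} : Finset ℕ) g (2*m)
          - ext ({2*m, 2*m+1} : Finset ℕ) g (2*m+1))^2)) with hψ
    have hφmeas : Measurable φ := by
      refine Finset.measurable_prod _ fun k _ => ?_
      have h1 := hextmeas (Finset.range (2*m)) (2*k)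
      have h2 := hextmeas (Finset.range (2*m)) (2*k+1)
      exact (ENNReal.measurable_ofReal.comp
        (((h1.sub h2).pow_const 2).const_mul (-l)).exp)
    have hψmeas : Measurable ψ := by
      have h1 := hextmeas ({2*m, 2*m+1} : Finset ℕ) (2*m)
      have h2 := hextmeas ({2*m, 2*m+1} : Finset ℕ) (2*m+1)
      exact (ENNReal.measurable_ofReal.comp
        (((h1.sub h2).pow_const 2).const_mul (-l)).exp)
    have hindepFG : IndepFun (fun ω => ∏ k ∈ Finset.range m, F k ω) (F m) P := by
      have := hbase.comp hφmeas hψmeas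
      have heq1 : (φ ∘ fun ω (i : {x // x ∈ Finset.range (2*m)}) => X i ω)
          = fun ω => ∏ k ∈ Finset.range m, F k ω := by
        funext ω
        simp only [Function.comp_apply, hφ, hF]
        refine Finset.prod_congr rfl fun k hk => ?_
        rw [Finset.mem_range] at hk
        simp only [hext]
        rw [dif_pos (by simp only [Finset.mem_range]; omega),
          dif_pos (by simp only [Finset.mem_range]; omega)]
      have heq2 : (ψ ∘ fun ω (i : {x // x ∈ ({2*m, 2*m+1} : Finset ℕ)}) => X i ω) = F m := by
        funext ω
        simp only [Function.comp_apply, hψ, hF]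
        simp only [hext]
        rw [dif_pos (by simp), dif_pos (by simp)]
      rwa [heq1, heq2] at this
    calc ∫⁻ ω, ∏ k ∈ Finset.range (m+1), F k ω ∂P
        = ∫⁻ ω, ((fun ω => ∏ k ∈ Finset.range m, F k ω) * F m) ω ∂P := by
          congr 1; funext ω; simp [Finset.prod_range_succ]
      _ = (∫⁻ ω, ∏ k ∈ Finset.range m, F k ω ∂P) * ∫⁻ ω, F m ω ∂P :=
          lintegral_mul_eq_lintegral_mul_lintegral_of_indepFun hGmeas (hFmeas m) hindepFG
      _ ≤ B ^ m * B := mul_le_mul ih (hB (2*m) (2*m+1) (by omega)) zero_le zero_le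
      _ = B ^ (m+1) := (pow_succ B m).symm


theorem std_left_tail_summable_bound
    {Ω : Type*} [MeasurableSpace Ω] (P : Measure Ω) [IsProbabilityMeasure P]
    (X : ℕ → Ω → ℝ) (μ σ : ℝ) (hσ : 0 < σ)
    (hmeas : ∀ i, Measurable (X i))
    (hindep : iIndepFun X P)
    (hdist : ∀ i, Measure.map (X i) P = gaussianReal μ (Real.toNNReal (σ ^ 2)))
    (c : ℝ) (hc : 0 < c) :
    ∃ ε : ℝ, 0 < ε ∧ ε < σ ∧
      ∑' n : ℕ, P {ω | sampleStd X (n + 2) ω ≤ σ - ε} ≤ ENNReal.ofReal c := by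
  set v : ℝ≥0 := Real.toNNReal (σ ^ 2) with hv
  have hvr : (v : ℝ) = σ^2 := Real.coe_toNNReal _ (by positivity)
  have hvne : v ≠ 0 := by
    intro h
    rw [h] at hvr
    simp at hvr
    nlinarith
  -- parameters
  set st : ℝ := min (1/2) (c/2) with hst
  have hst0 : 0 < st := lt_min (by norm_num) (by positivity)
  have hst1 : st ≤ 1/2 := min_le_left _ _
  set C : ℝ := (Real.sqrt (2*π*(v:ℝ)))⁻¹ * Real.sqrt π with hC
  have hC0 : 0 < C := by
    apply mul_pos (inv_pos.mpr (Real.sqrt_pos.mpr (by rw [hvr]; positivity)))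
      (Real.sqrt_pos.mpr pi_pos)
  set l : ℝ := max 1 ((4*C/st^2)^2) with hl
  have hl1 : (1:ℝ) ≤ l := le_max_left _ _
  have hl0 : (0:ℝ) < l := lt_of_lt_of_le one_pos hl1
  set ρ : ℝ := (Real.sqrt (2*π*(v:ℝ)))⁻¹ * Real.sqrt (π/l) with hρdef
  have hρ0 : 0 ≤ ρ := by positivity
  have hρ : ρ ≤ (st/2)^2 := by
    have h1 : ρ = C / Real.sqrt l := by
      rw [hρdef, hC, Real.sqrt_div pi_pos.le l]
      ring
    have h2 : 4*C/st^2 ≤ Real.sqrt l := by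
      calc 4*C/st^2 = Real.sqrt ((4*C/st^2)^2) := (Real.sqrt_sq (by positivity)).symm
        _ ≤ Real.sqrt l := Real.sqrt_le_sqrt (le_max_right _ _)
    have h3 : C / Real.sqrt l ≤ C / (4*C/st^2) :=
      div_le_div_of_nonneg_left hC0.le (by positivity) h2
    have h4 : C / (4*C/st^2) = (st/2)^2 := by
      field_simp
      ring
    rw [h1]
    exact h3.trans h4.le
  set sρ : ℝ := Real.sqrt ρ with hsρdef
  have hsρ0 : 0 ≤ sρ := Real.sqrt_nonneg _
  have hsρ : sρ ≤ st/2 := by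
    calc sρ ≤ Real.sqrt ((st/2)^2) := Real.sqrt_le_sqrt hρ
      _ = st/2 := Real.sqrt_sq (by positivity)
  have hsρ1 : sρ ≤ 1 := by linarith
  set d : ℝ := min (σ/2) (Real.sqrt (Real.log 2 / (2*l))) with hd
  have hd0 : 0 < d := lt_min (by positivity)
    (Real.sqrt_pos.mpr (div_pos (Real.log_pos (by norm_num)) (by positivity)))
  have hdσ : d ≤ σ/2 := min_le_left _ _
  refine ⟨σ - d, by linarith, by linarith, ?_⟩
  set t : ℝ := rexp (2*l*d^2) with h255
  have ht0 : 0 < t := Real.exp_pos _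
  have ht : t ≤ 2 := by
    rw [show (2:ℝ) = rexp (Real.log 2) from (Real.exp_log (by norm_num)).symm]
    apply Real.exp_le_exp.mpr
    have hd2 : d^2 ≤ Real.log 2/(2*l) := by
      calc d^2 ≤ (Real.sqrt (Real.log 2 / (2*l)))^2 :=
            pow_le_pow_left₀ hd0.le (min_le_right _ _) 2
        _ = Real.log 2/(2*l) := Real.sq_sqrt (by positivity)
    calc 2*l*d^2 ≤ 2*l*(Real.log 2/(2*l)) := by
          apply mul_le_mul_of_nonneg_left hd2 (by positivity)
      _ = Real.log 2 := by field_simp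
  set s : ℝ := t * sρ with hsdef
  have hs0 : 0 ≤ s := by positivity
  have hs : s ≤ st := by
    calc t * sρ ≤ 2 * (st/2) := mul_le_mul ht hsρ hsρ0 (by norm_num)
      _ = st := by ring
  -- the factor bound
  set B : ℝ≥0∞ := ENNReal.ofReal ρ with hB
  have hBfact : ∀ i j : ℕ, i ≠ j →
      ∫⁻ ω, ENNReal.ofReal (rexp (-l * (X i ω - X j ω)^2)) ∂P ≤ B :=
    fun i j hij => factor_bound P (X i) (X j) (hmeas i) (hmeas j)
      (hindep.indepFun hij) μ v hvne (hdist i) (hdist j) l hl0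
  -- per-n bound
  have key : ∀ n : ℕ, P {ω | sampleStd X (n + 2) ω ≤ σ - (σ - d)}
      ≤ ENNReal.ofReal (s^(n+1)) := by
    intro n
    set m : ℕ := (n+2)/2 with hm
    have hm1 : n+1 ≤ 2*m := by omega
    have hm2 : 2*m ≤ n+2 := by omega
    set F : ℕ → Ω → ℝ≥0∞ :=
      fun k ω => ENNReal.ofReal (rexp (-l * (X (2*k) ω - X (2*k+1) ω)^2)) with hF
    have hGmeas : Measurable (fun ω => ∏ k ∈ Finset.range m, F k ω) :=
      Finset.measurable_prod _ fun k _ => by fun_prop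
    set a : ℝ := ((n:ℝ)+1) * (2*l*d^2) with ha
    have hsub : {ω | sampleStd X (n + 2) ω ≤ σ - (σ - d)} ⊆
        {ω | ENNReal.ofReal (rexp (-a)) ≤ ∏ k ∈ Finset.range m, F k ω} := by
      intro ω hω
      simp only [Set.mem_setOf_eq, sub_sub_cancel] at hω ⊢
      have hsum0 : 0 ≤ sampleVar X (n+2) ω := by
        apply div_nonneg (Finset.sum_nonneg fun i _ => sq_nonneg _)
        push_cast; linarith
      have hω' : Real.sqrt (sampleVar X (n+2) ω) ≤ d := hω
      have h1 : sampleVar X (n+2) ω ≤ d^2 := by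
        calc sampleVar X (n+2) ω = (Real.sqrt (sampleVar X (n+2) ω))^2 :=
              (Real.sq_sqrt hsum0).symm
          _ ≤ d^2 := pow_le_pow_left₀ (Real.sqrt_nonneg _) hω' 2
      have h2 : ∑ i ∈ Finset.range (n+2), (X i ω - sampleMean X (n+2) ω)^2
          ≤ d^2 * ((n:ℝ)+1) := by
        have hden : ((n+2:ℕ):ℝ) - 1 = (n:ℝ)+1 := by push_cast; ring
        unfold sampleVar at h1
        rw [hden] at h1
        exact (div_le_iff₀ (by positivity)).mp h1
      have h3 : ∑ k ∈ Finset.range m, (X (2*k) ω - X (2*k+1) ω)^2 ≤ 2*(d^2*((n:ℝ)+1)) := by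
        calc ∑ k ∈ Finset.range m, (X (2*k) ω - X (2*k+1) ω)^2
            ≤ 2 * ∑ i ∈ Finset.range (2*m), (X i ω - sampleMean X (n+2) ω)^2 :=
              pair_sum_le (fun i => X i ω) (sampleMean X (n+2) ω) m
          _ ≤ 2 * ∑ i ∈ Finset.range (n+2), (X i ω - sampleMean X (n+2) ω)^2 := by
              apply mul_le_mul_of_nonneg_left _ (by norm_num)
              apply Finset.sum_le_sum_of_subset_of_nonneg
                (Finset.range_subset_range.mpr hm2) (fun i _ _ => sq_nonneg _)
          _ ≤ 2*(d^2*((n:ℝ)+1)) := by linarith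
      have h4 : ∏ k ∈ Finset.range m, F k ω
          = ENNReal.ofReal (rexp (-l * ∑ k ∈ Finset.range m, (X (2*k) ω - X (2*k+1) ω)^2)) := by
        rw [← ENNReal.ofReal_prod_of_nonneg (fun _ _ => (Real.exp_pos _).le)]
        congr 1
        rw [← Real.exp_sum]
        congr 1
        rw [Finset.mul_sum]
      rw [h4]
      apply ENNReal.ofReal_le_ofReal
      apply Real.exp_le_exp.mpr
      rw [ha]
      nlinarith [hl0.le, h3]
    have hmarkov := mul_meas_ge_le_lintegral₀ (μ := P) hGmeas.aemeasurable (ENNReal.ofReal (rexp (-a)))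
    have hprod := prod_bound P X hmeas hindep l B hBfact m
    have hne0 : (ENNReal.ofReal (rexp (-a))) ≠ 0 := by
      simp [ENNReal.ofReal_eq_zero, not_le, Real.exp_pos]
    have hnetop : (ENNReal.ofReal (rexp (-a))) ≠ ⊤ := ENNReal.ofReal_ne_top
    have hinv : (ENNReal.ofReal (rexp (-a)))⁻¹ = ENNReal.ofReal (rexp a) := by
      rw [← ENNReal.ofReal_inv_of_pos (Real.exp_pos _), ← Real.exp_neg, neg_neg]
    calc P {ω | sampleStd X (n + 2) ω ≤ σ - (σ - d)}
        ≤ P {ω | ENNReal.ofReal (rexp (-a)) ≤ ∏ k ∈ Finset.range m, F k ω} :=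
          measure_mono hsub
      _ ≤ (ENNReal.ofReal (rexp (-a)))⁻¹ * (B ^ m) := by
          have hid : P {ω | ENNReal.ofReal (rexp (-a)) ≤ ∏ k ∈ Finset.range m, F k ω}
              = (ENNReal.ofReal (rexp (-a)))⁻¹ * (ENNReal.ofReal (rexp (-a)) *
                P {ω | ENNReal.ofReal (rexp (-a)) ≤ ∏ k ∈ Finset.range m, F k ω}) := by
            rw [← mul_assoc, ENNReal.inv_mul_cancel hne0 hnetop, one_mul]
          rw [hid]
          exact mul_le_mul_right (hmarkov.trans hprod) _
      _ = ENNReal.ofReal (rexp a * ρ^m) := by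
          rw [hinv, hB, ← ENNReal.ofReal_pow hρ0, ← ENNReal.ofReal_mul (Real.exp_pos _).le]
      _ ≤ ENNReal.ofReal (s^(n+1)) := by
          apply ENNReal.ofReal_le_ofReal
          have e1 : rexp a = t^(n+1) := by
            rw [ha, show ((n:ℝ)+1) = ((n+1 : ℕ):ℝ) by push_cast; ring, Real.exp_nat_mul]
          have e2 : ρ^m ≤ sρ^(n+1) := by
            have hρs : ρ = sρ^2 := (Real.sq_sqrt hρ0).symm
            rw [hρs, ← pow_mul]
            exact pow_le_pow_of_le_one hsρ0 hsρ1 hm1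
          calc rexp a * ρ^m ≤ t^(n+1) * sρ^(n+1) := by
                rw [e1]
                exact mul_le_mul_of_nonneg_left e2 (by positivity)
            _ = s^(n+1) := by rw [hsdef, mul_pow]
  calc ∑' n : ℕ, P {ω | sampleStd X (n + 2) ω ≤ σ - (σ - d)}
      ≤ ∑' n : ℕ, ENNReal.ofReal (s^(n+1)) := ENNReal.tsum_le_tsum key
    _ = ∑' n : ℕ, (ENNReal.ofReal s)^(n+1) := by
        congr 1; funext n; rw [ENNReal.ofReal_pow hs0]
    _ = ENNReal.ofReal s * ∑' n : ℕ, (ENNReal.ofReal s)^n := by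
        simp_rw [pow_succ']
        rw [ENNReal.tsum_mul_left]
    _ = ENNReal.ofReal s * (1 - ENNReal.ofReal s)⁻¹ := by rw [ENNReal.tsum_geometric]
    _ ≤ ENNReal.ofReal s * 2 := by
        apply mul_le_mul_right
        have hs2 : ENNReal.ofReal s ≤ 2⁻¹ := by
          rw [show ((2:ℝ≥0∞))⁻¹ = ENNReal.ofReal (1/2) by
            rw [ENNReal.ofReal_div_of_pos (by norm_num)]; simp]
          exact ENNReal.ofReal_le_ofReal (by linarith)
        have h1 : (2:ℝ≥0∞)⁻¹ ≤ 1 - ENNReal.ofReal s := by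
          calc (2:ℝ≥0∞)⁻¹ = 1 - 2⁻¹ := ENNReal.one_sub_inv_two.symm
            _ ≤ 1 - ENNReal.ofReal s := tsub_le_tsub_left hs2 1
        calc (1 - ENNReal.ofReal s)⁻¹ ≤ ((2:ℝ≥0∞)⁻¹)⁻¹ := ENNReal.inv_le_inv' h1
          _ = 2 := by simp
    _ = ENNReal.ofReal (s * 2) := by
        rw [ENNReal.ofReal_mul hs0, ENNReal.ofReal_ofNat]
    _ ≤ ENNReal.ofReal c := by
        apply ENNReal.ofReal_le_ofReal
        have : st ≤ c/2 := min_le_right _ _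
        linarith
end

section
/- Let X₁,…,Xₙ be i.i.d. samples from N(μ, σ²) with σ > 0, n ≥ 2, and for each 2 ≤ k ≤ n let X̄_k and S_k² denote the sample mean and sample variance of the first k samples. Then the sample mean X̄ₙ is independent of the random vector (S₂², S₃², …, Sₙ²). -/
open MeasureTheory ProbabilityTheory Real

open scoped ENNReal NNReal

set_option linter.unusedSectionVars false
set_option linter.unusedTactic false


section Aux
variable {α β : Type*} [MeasurableSpace α] [MeasurableSpace β]

lemma map_withDensity_equiv (e : α ≃ᵐ β) (μ : Measure α) {f : α → ℝ≥0∞} (hf : Measurable f) :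
    (μ.withDensity f).map e = (μ.map e).withDensity (fun y => f (e.symm y)) := by
  ext s hs
  rw [Measure.map_apply e.measurable hs, withDensity_apply _ (e.measurable hs),
    withDensity_apply _ hs]
  rw [show (∫⁻ y in s, f (e.symm y) ∂(μ.map e)) = ∫⁻ x in e ⁻¹' s, f (e.symm (e x)) ∂μ from
    setLIntegral_map hs (hf.comp e.symm.measurable) e.measurable]
  simp only [MeasurableEquiv.symm_apply_apply]

lemma prod_gaussian_withDensity {a b : ℝ≥0} (ha : a ≠ 0) (hb : b ≠ 0) :
    (gaussianReal 0 a).prod (gaussianReal 0 b)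
      = (volume : Measure (ℝ × ℝ)).withDensity
          (fun p => gaussianPDF 0 a p.1 * gaussianPDF 0 b p.2) := by
  refine (Measure.prod_eq fun s t hs ht => ?_)
  rw [withDensity_apply _ (hs.prod ht), Measure.volume_eq_prod, ← Measure.prod_restrict,
    lintegral_prod_mul (measurable_gaussianPDF 0 a).aemeasurable
      (measurable_gaussianPDF 0 b).aemeasurable,
    gaussianReal_of_var_ne_zero 0 ha, gaussianReal_of_var_ne_zero 0 hb,
    withDensity_apply _ hs, withDensity_apply _ ht]
end Aux


lemma pdf_rot_identity {a b α β γ δ : ℝ} (ha : 0 < a) (hb : 0 < b)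
    (hD : α * δ - β * γ ≠ 0) (horth : α * γ * a + β * δ * b = 0)
    (ha' : 0 < α ^ 2 * a + β ^ 2 * b) (hb' : 0 < γ ^ 2 * a + δ ^ 2 * b) (u w : ℝ) :
    |α * δ - β * γ|⁻¹ * (gaussianPDFReal 0 a.toNNReal ((δ * u - β * w) / (α * δ - β * γ)) *
      gaussianPDFReal 0 b.toNNReal ((α * w - γ * u) / (α * δ - β * γ)))
    = gaussianPDFReal 0 (α ^ 2 * a + β ^ 2 * b).toNNReal u *
      gaussianPDFReal 0 (γ ^ 2 * a + δ ^ 2 * b).toNNReal w := by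
  set D := α * δ - β * γ with hDdef
  set a' := α ^ 2 * a + β ^ 2 * b with ha'def
  set b' := γ ^ 2 * a + δ ^ 2 * b with hb'def
  have hab : a' * b' = a * b * D ^ 2 := by
    linear_combination (α * γ * a + β * δ * b) * horth
  have hkey : b * (δ * u - β * w) ^ 2 + a * (α * w - γ * u) ^ 2 = b' * u ^ 2 + a' * w ^ 2 := by
    linear_combination (-2 * u * w) * horth
  simp only [gaussianPDFReal, sub_zero, Real.coe_toNNReal _ ha.le, Real.coe_toNNReal _ hb.le,
    Real.coe_toNNReal _ ha'.le, Real.coe_toNNReal _ hb'.le]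
  have hconst : (√(2 * π * a'))⁻¹ * (√(2 * π * b'))⁻¹ = |D|⁻¹ * ((√(2 * π * a))⁻¹ * (√(2 * π * b))⁻¹) := by
    have hsq : √(2 * π * a') * √(2 * π * b') = |D| * (√(2 * π * a) * √(2 * π * b)) := by
      rw [← Real.sqrt_mul (by positivity), ← Real.sqrt_sq_eq_abs, ← Real.sqrt_mul (by positivity),
        ← Real.sqrt_mul (by positivity)]
      congr 1
      linear_combination (4 * π ^ 2) * hab
    rw [← mul_inv, ← mul_inv, ← mul_inv, hsq]
  have hexp : rexp (-(u ^ 2) / (2 * a')) * rexp (-(w ^ 2) / (2 * b'))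
      = rexp (-(((δ * u - β * w) / D) ^ 2) / (2 * a)) * rexp (-(((α * w - γ * u) / D) ^ 2) / (2 * b)) := by
    rw [← Real.exp_add, ← Real.exp_add]
    congr 1
    have h1 : -(u ^ 2) / (2 * a') + -(w ^ 2) / (2 * b')
        = -(b' * u ^ 2 + a' * w ^ 2) / (2 * (a' * b')) := by
      field_simp; ring
    have h2 : -(((δ * u - β * w) / D) ^ 2) / (2 * a) + -(((α * w - γ * u) / D) ^ 2) / (2 * b)
        = -(b * (δ * u - β * w) ^ 2 + a * (α * w - γ * u) ^ 2) / (2 * (a * b * D ^ 2)) := by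
      field_simp; ring
    rw [h1, h2, hkey, hab]
  calc |D|⁻¹ * ((√(2 * π * a))⁻¹ * rexp (-(((δ * u - β * w) / D) ^ 2) / (2 * a)) *
        ((√(2 * π * b))⁻¹ * rexp (-(((α * w - γ * u) / D) ^ 2) / (2 * b))))
      = (|D|⁻¹ * ((√(2 * π * a))⁻¹ * (√(2 * π * b))⁻¹)) *
        (rexp (-(((δ * u - β * w) / D) ^ 2) / (2 * a)) * rexp (-(((α * w - γ * u) / D) ^ 2) / (2 * b))) := by ring
    _ = ((√(2 * π * a'))⁻¹ * (√(2 * π * b'))⁻¹) *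
        (rexp (-(u ^ 2) / (2 * a')) * rexp (-(w ^ 2) / (2 * b'))) := by rw [← hconst, ← hexp]
    _ = (√(2 * π * a'))⁻¹ * rexp (-(u ^ 2) / (2 * a')) * ((√(2 * π * b'))⁻¹ * rexp (-(w ^ 2) / (2 * b'))) := by ring


section
variable {a b : ℝ}

lemma gaussian_rot_centered {a b α β γ δ : ℝ} (ha : 0 < a) (hb : 0 < b)
    (hD : α * δ - β * γ ≠ 0) (horth : α * γ * a + β * δ * b = 0)
    (ha' : 0 < α ^ 2 * a + β ^ 2 * b) (hb' : 0 < γ ^ 2 * a + δ ^ 2 * b) :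
    Measure.map (fun p : ℝ × ℝ => (α * p.1 + β * p.2, γ * p.1 + δ * p.2))
        ((gaussianReal 0 a.toNNReal).prod (gaussianReal 0 b.toNNReal))
      = (gaussianReal 0 (α ^ 2 * a + β ^ 2 * b).toNNReal).prod
        (gaussianReal 0 (γ ^ 2 * a + δ ^ 2 * b).toNNReal) := by
  set D := α * δ - β * γ with hDdef
  -- the measurable equiv given by the linear map
  have left_inv : ∀ p : ℝ × ℝ, (((δ * (α * p.1 + β * p.2) - β * (γ * p.1 + δ * p.2)) / D),
      ((α * (γ * p.1 + δ * p.2) - γ * (α * p.1 + β * p.2)) / D)) = p := by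
    intro p
    have h1 : δ * (α * p.1 + β * p.2) - β * (γ * p.1 + δ * p.2) = D * p.1 := by rw [hDdef]; ring
    have h2 : α * (γ * p.1 + δ * p.2) - γ * (α * p.1 + β * p.2) = D * p.2 := by rw [hDdef]; ring
    rw [h1, h2, mul_div_cancel_left₀ _ hD, mul_div_cancel_left₀ _ hD]
  have right_inv : ∀ q : ℝ × ℝ,
      (α * ((δ * q.1 - β * q.2) / D) + β * ((α * q.2 - γ * q.1) / D),
       γ * ((δ * q.1 - β * q.2) / D) + δ * ((α * q.2 - γ * q.1) / D)) = q := by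
    intro q
    have h1 : α * ((δ * q.1 - β * q.2) / D) + β * ((α * q.2 - γ * q.1) / D)
        = (α * (δ * q.1 - β * q.2) + β * (α * q.2 - γ * q.1)) / D := by ring
    have h2 : γ * ((δ * q.1 - β * q.2) / D) + δ * ((α * q.2 - γ * q.1) / D)
        = (γ * (δ * q.1 - β * q.2) + δ * (α * q.2 - γ * q.1)) / D := by ring
    have h3 : α * (δ * q.1 - β * q.2) + β * (α * q.2 - γ * q.1) = D * q.1 := by rw [hDdef]; ring
    have h4 : γ * (δ * q.1 - β * q.2) + δ * (α * q.2 - γ * q.1) = D * q.2 := by rw [hDdef]; ring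
    rw [h1, h2, h3, h4, mul_div_cancel_left₀ _ hD, mul_div_cancel_left₀ _ hD]
  let e : ℝ × ℝ ≃ᵐ ℝ × ℝ :=
    { toFun := fun p => (α * p.1 + β * p.2, γ * p.1 + δ * p.2)
      invFun := fun q => ((δ * q.1 - β * q.2) / D, (α * q.2 - γ * q.1) / D)
      left_inv := left_inv
      right_inv := right_inv
      measurable_toFun := by
        exact ((measurable_fst.const_mul α).add (measurable_snd.const_mul β)).prodMk
          ((measurable_fst.const_mul γ).add (measurable_snd.const_mul δ))
      measurable_invFun := by
        exact (((measurable_fst.const_mul δ).sub (measurable_snd.const_mul β)).div_const D).prodMk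
          (((measurable_snd.const_mul α).sub (measurable_fst.const_mul γ)).div_const D) }
  -- the pushforward of volume under e
  have hvol : Measure.map (⇑e) (volume : Measure (ℝ × ℝ))
      = ENNReal.ofReal |D|⁻¹ • (volume : Measure (ℝ × ℝ)) := by
    have hL : (⇑(Matrix.toLin (Module.Basis.finTwoProd ℝ) (Module.Basis.finTwoProd ℝ) !![α, β; γ, δ])
        : ℝ × ℝ → ℝ × ℝ) = ⇑e := by
      funext p
      exact Matrix.toLin_finTwoProd_apply α β γ δ p
    have hdet : LinearMap.det (Matrix.toLin (Module.Basis.finTwoProd ℝ) (Module.Basis.finTwoProd ℝ)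
        !![α, β; γ, δ]) = D := by
      rw [LinearMap.det_toLin, Matrix.det_fin_two_of]
    rw [← hL, Measure.map_linearMap_addHaar_eq_smul_addHaar _ (by rw [hdet]; exact hD), hdet,
      abs_inv]
  have haNN : a.toNNReal ≠ 0 := by simp [Real.toNNReal_pos.2 ha, (Real.toNNReal_pos.2 ha).ne']
  have hbNN : b.toNNReal ≠ 0 := by simp [(Real.toNNReal_pos.2 hb).ne']
  have ha'NN : (α ^ 2 * a + β ^ 2 * b).toNNReal ≠ 0 := by simp [(Real.toNNReal_pos.2 ha').ne']
  have hb'NN : (γ ^ 2 * a + δ ^ 2 * b).toNNReal ≠ 0 := by simp [(Real.toNNReal_pos.2 hb').ne']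
  have hrw := prod_gaussian_withDensity haNN hbNN
  show Measure.map (⇑e) _ = _
  rw [prod_gaussian_withDensity haNN hbNN,
    map_withDensity_equiv e _ (show Measurable fun p : ℝ × ℝ =>
        gaussianPDF 0 a.toNNReal p.1 * gaussianPDF 0 b.toNNReal p.2 from
      ((measurable_gaussianPDF 0 a.toNNReal).comp measurable_fst).mul
        ((measurable_gaussianPDF 0 b.toNNReal).comp measurable_snd)),
    hvol, withDensity_smul_measure, prod_gaussian_withDensity ha'NN hb'NN]
  rw [← withDensity_smul' _ _ (by simp)]
  apply withDensity_congr_ae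
  filter_upwards with p
  show ENNReal.ofReal |D|⁻¹ * (gaussianPDF 0 a.toNNReal ((δ * p.1 - β * p.2) / D) *
      gaussianPDF 0 b.toNNReal ((α * p.2 - γ * p.1) / D)) = _
  simp only [gaussianPDF]
  rw [← ENNReal.ofReal_mul (gaussianPDFReal_nonneg _ _ _),
    ← ENNReal.ofReal_mul (by positivity : (0:ℝ) ≤ |D|⁻¹),
    ← ENNReal.ofReal_mul (gaussianPDFReal_nonneg _ _ _)]
  refine congrArg ENNReal.ofReal ?_
  have := pdf_rot_identity ha hb hD horth ha' hb' p.1 p.2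
  rw [← hDdef] at this
  linarith [this]
end

lemma gaussian_rot {a b α β γ δ : ℝ} (p q : ℝ) (ha : 0 < a) (hb : 0 < b)
    (hD : α * δ - β * γ ≠ 0) (horth : α * γ * a + β * δ * b = 0)
    (ha' : 0 < α ^ 2 * a + β ^ 2 * b) (hb' : 0 < γ ^ 2 * a + δ ^ 2 * b) :
    Measure.map (fun x : ℝ × ℝ => (α * x.1 + β * x.2, γ * x.1 + δ * x.2))
        ((gaussianReal p a.toNNReal).prod (gaussianReal q b.toNNReal))
      = (gaussianReal (α * p + β * q) (α ^ 2 * a + β ^ 2 * b).toNNReal).prod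
        (gaussianReal (γ * p + δ * q) (γ ^ 2 * a + δ ^ 2 * b).toNNReal) := by
  have hT : Measurable (fun x : ℝ × ℝ => (α * x.1 + β * x.2, γ * x.1 + δ * x.2)) :=
    ((measurable_fst.const_mul α).add (measurable_snd.const_mul β)).prodMk
      ((measurable_fst.const_mul γ).add (measurable_snd.const_mul δ))
  have h1 : gaussianReal p a.toNNReal = (gaussianReal 0 a.toNNReal).map (· + p) := by
    rw [gaussianReal_map_add_const]; rw [zero_add]
  have h2 : gaussianReal q b.toNNReal = (gaussianReal 0 b.toNNReal).map (· + q) := by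
    rw [gaussianReal_map_add_const]; rw [zero_add]
  rw [h1, h2, Measure.map_prod_map _ _ (measurable_add_const p) (measurable_add_const q),
    Measure.map_map hT ((measurable_add_const p).prodMap (measurable_add_const q))]
  have hcomp : (fun x : ℝ × ℝ => (α * x.1 + β * x.2, γ * x.1 + δ * x.2)) ∘
      (Prod.map (· + p) (· + q))
      = (Prod.map (· + (α * p + β * q)) (· + (γ * p + δ * q))) ∘
        (fun x : ℝ × ℝ => (α * x.1 + β * x.2, γ * x.1 + δ * x.2)) := by
    funext x
    simp only [Function.comp_apply, Prod.map_apply, Prod.map_fst, Prod.map_snd]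
    exact Prod.ext (by simp [Prod.map]; ring) (by simp [Prod.map]; ring)
  rw [hcomp, ← Measure.map_map ((measurable_add_const _).prodMap (measurable_add_const _)) hT,
    gaussian_rot_centered ha hb hD horth ha' hb',
    ← Measure.map_prod_map _ _ (measurable_add_const _) (measurable_add_const _),
    gaussianReal_map_add_const, gaussianReal_map_add_const, zero_add, zero_add]

section Shuffles
variable {A B C : Type*} [MeasurableSpace A] [MeasurableSpace B] [MeasurableSpace C]

lemma shuffle1 (μ1 : Measure A) (μ2 : Measure B) (μ3 : Measure C)
    [SigmaFinite μ1] [SigmaFinite μ2] [SigmaFinite μ3] :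
    Measure.map (fun p : A × (B × C) => ((p.2.1, p.1), p.2.2)) (μ1.prod (μ2.prod μ3))
      = (μ2.prod μ1).prod μ3 := by
  have hfun : (fun p : A × (B × C) => ((p.2.1, p.1), p.2.2))
      = (Prod.map Prod.swap id) ∘ (MeasurableEquiv.prodAssoc.symm : A × (B × C) → (A × B) × C) := by
    funext p; rfl
  rw [hfun, ← Measure.map_map (measurable_swap.prodMap measurable_id)
    MeasurableEquiv.prodAssoc.symm.measurable,
    ← Measure.prodAssoc_prod (μ := μ1) (ν := μ2) (τ := μ3),
    MeasurableEquiv.map_symm_map,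
    ← Measure.map_id (μ := μ3), ← Measure.map_prod_map _ _ measurable_swap measurable_id,
    Measure.prod_swap, Measure.map_id]

lemma shuffle3 (κ1 : Measure A) (κ2 : Measure B) (μ3 : Measure C)
    [SigmaFinite κ1] [SigmaFinite κ2] [SigmaFinite μ3] :
    Measure.map (fun p : (A × B) × C => (p.1.1, (p.2, p.1.2))) ((κ1.prod κ2).prod μ3)
      = κ1.prod (μ3.prod κ2) := by
  have hfun : (fun p : (A × B) × C => (p.1.1, (p.2, p.1.2)))
      = (Prod.map id Prod.swap) ∘ (MeasurableEquiv.prodAssoc : (A × B) × C → A × (B × C)) := by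
    funext p; rfl
  rw [hfun, ← Measure.map_map (measurable_id.prodMap measurable_swap)
    MeasurableEquiv.prodAssoc.measurable,
    Measure.prodAssoc_prod,
    ← Measure.map_id (μ := κ1), ← Measure.map_prod_map _ _ measurable_id measurable_swap,
    Measure.map_id, Measure.prod_swap]
end Shuffles

section Tuple
variable {Ω : Type*} [MeasurableSpace Ω] {P : Measure Ω} [IsProbabilityMeasure P]

lemma indep_tuple {X : ℕ → Ω → ℝ} (hmeas : ∀ i, Measurable (X i))
    (hindep : iIndepFun X P) (N : ℕ) :
    IndepFun (X N) (fun ω => fun i : Fin N => X (i : ℕ) ω) P := by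
  have hdisj : Disjoint ({N} : Finset ℕ) (Finset.range N) := by
    simp [Finset.disjoint_left]
  have h := hindep.indepFun_finset {N} (Finset.range N) hdisj hmeas
  have h2 := h.comp (φ := fun y : (({N} : Finset ℕ) : Type) → ℝ => y ⟨N, by simp⟩)
    (ψ := fun y : ((Finset.range N : Finset ℕ) : Type) → ℝ =>
      fun i : Fin N => y ⟨(i : ℕ), by simp [Finset.mem_range, i.isLt]⟩)
    (show Measurable fun y : (({N} : Finset ℕ) : Type) → ℝ => y ⟨N, by simp⟩ from measurable_pi_apply _)
    (measurable_pi_lambda _ fun i => measurable_pi_apply _)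
  exact h2
end Tuple

section Main
variable {Ω : Type*} [MeasurableSpace Ω]

lemma sampleMean_measurable {X : ℕ → Ω → ℝ} (hmeas : ∀ i, Measurable (X i)) (k : ℕ) :
    Measurable (sampleMean X k) := by
  unfold sampleMean
  exact (Finset.measurable_sum _ fun i _ => hmeas i).div_const _

lemma sampleMean_succ (X : ℕ → Ω → ℝ) (m : ℕ) (ω : Ω) :
    sampleMean X (m + 2) ω = ((m : ℝ) + 1) / ((m : ℝ) + 2) * sampleMean X (m + 1) ω
      + 1 / ((m : ℝ) + 2) * X (m + 1) ω := by
  have h1 : ((m : ℝ) + 1) ≠ 0 := by positivity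
  have h2 : ((m : ℝ) + 2) ≠ 0 := by positivity
  simp only [sampleMean, Finset.sum_range_succ]
  push_cast
  field_simp

lemma helmert_induction (P : Measure Ω) [IsProbabilityMeasure P]
    (X : ℕ → Ω → ℝ) (μ vr : ℝ) (hvr : 0 < vr)
    (hmeas : ∀ i, Measurable (X i))
    (hindep : iIndepFun X P)
    (hdist : ∀ i, Measure.map (X i) P = gaussianReal μ vr.toNNReal) (m : ℕ) :
    Measure.map (fun ω => (sampleMean X (m + 1) ω,
        fun j : Fin m => X ((j : ℕ) + 1) ω - sampleMean X ((j : ℕ) + 1) ω)) P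
      = (gaussianReal μ (vr / ((m : ℝ) + 1)).toNNReal).prod
          (Measure.map (fun ω => fun j : Fin m =>
            X ((j : ℕ) + 1) ω - sampleMean X ((j : ℕ) + 1) ω) P) := by
  have hMmeas : ∀ k, Measurable (sampleMean X k) := sampleMean_measurable hmeas
  induction m with
  | zero =>
      have hM1 : sampleMean X 1 = X 0 := by
        funext ω; simp [sampleMean]
      have hW0 : (fun ω : Ω => fun j : Fin 0 => X ((j : ℕ) + 1) ω - sampleMean X ((j : ℕ) + 1) ω)
          = fun _ : Ω => (fun j : Fin 0 => j.elim0) := by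
        funext ω j; exact j.elim0
      have hpair : (fun ω => (sampleMean X (0 + 1) ω,
            fun j : Fin 0 => X ((j : ℕ) + 1) ω - sampleMean X ((j : ℕ) + 1) ω))
          = (fun x : ℝ => (x, (fun j : Fin 0 => j.elim0 : Fin 0 → ℝ))) ∘ sampleMean X 1 := by
        funext ω; exact Prod.ext rfl (funext fun j => j.elim0)
      rw [hW0, hpair, ← Measure.map_map (show Measurable fun x : ℝ =>
          (x, (fun j : Fin 0 => j.elim0 : Fin 0 → ℝ)) from measurable_id.prodMk measurable_const)
        (hMmeas 1),
        ← Measure.prod_dirac, hM1, hdist 0]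
      congr 1
      · norm_num
      · rw [Measure.map_const]
        simp
  | succ m IH =>
      -- notation
      set Wm : Ω → (Fin m → ℝ) := fun ω => fun j : Fin m =>
        X ((j : ℕ) + 1) ω - sampleMean X ((j : ℕ) + 1) ω with hWmdef
      set Ws : Ω → (Fin (m+1) → ℝ) := fun ω => fun j : Fin (m+1) =>
        X ((j : ℕ) + 1) ω - sampleMean X ((j : ℕ) + 1) ω with hWsdef
      set Z : Ω → ℝ := fun ω => X (m+1) ω - sampleMean X (m+1) ω with hZdef
      have hWmmeas : Measurable Wm := measurable_pi_lambda _ fun j => (hmeas _).sub (hMmeas _)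
      have hWsmeas : Measurable Ws := measurable_pi_lambda _ fun j => (hmeas _).sub (hMmeas _)
      have hZmeas : Measurable Z := (hmeas _).sub (hMmeas _)
      -- X (m+1) is independent of (sampleMean X (m+1), Wm)
      set T : Ω → (Fin (m+1) → ℝ) := fun ω => fun i : Fin (m+1) => X (i : ℕ) ω with hTdef
      have hTmeas : Measurable T := measurable_pi_lambda _ fun i => hmeas _
      set pm : ℕ → (Fin (m+1) → ℝ) → ℝ := fun t y =>
        (∑ i ∈ Finset.range t, if h : i < m+1 then y ⟨i, h⟩ else 0) / (t : ℝ) with hpmdef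
      have hpm_meas : ∀ t, Measurable (pm t) := by
        intro t
        apply Measurable.div_const
        apply Finset.measurable_sum
        intro i _
        by_cases h : i < m + 1
        · simpa [h] using measurable_pi_apply (⟨i, h⟩ : Fin (m+1))
        · simp [h]
      have hpm_eq : ∀ t, t ≤ m + 1 → ∀ ω, pm t (T ω) = sampleMean X t ω := by
        intro t ht ω
        simp only [hpmdef, hTdef, sampleMean]
        congr 1
        refine Finset.sum_congr rfl fun i hi => ?_
        have hi' : i < m + 1 := lt_of_lt_of_le (Finset.mem_range.1 hi) ht
        simp [hi']
      set G : (Fin (m+1) → ℝ) → ℝ × (Fin m → ℝ) := fun y =>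
        (pm (m+1) y, fun j : Fin m =>
          y ⟨(j : ℕ) + 1, Nat.succ_lt_succ j.isLt⟩ - pm ((j : ℕ) + 1) y) with hGdef
      have hGmeas : Measurable G := by
        refine (hpm_meas _).prodMk (measurable_pi_lambda _ fun j => ?_)
        exact (measurable_pi_apply _).sub (hpm_meas _)
      have hGT : (fun ω => (sampleMean X (m+1) ω, Wm ω)) = G ∘ T := by
        funext ω
        refine Prod.ext (hpm_eq (m+1) le_rfl ω).symm ?_
        funext j
        show X ((j : ℕ) + 1) ω - sampleMean X ((j : ℕ) + 1) ω
          = T ω ⟨(j : ℕ) + 1, Nat.succ_lt_succ j.isLt⟩ - pm ((j : ℕ) + 1) (T ω)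
        rw [hpm_eq ((j : ℕ) + 1) (Nat.succ_le_succ j.isLt.le) ω]
      have hIndep1 : IndepFun (X (m+1)) (fun ω => (sampleMean X (m+1) ω, Wm ω)) P := by
        have h2 := (indep_tuple hmeas hindep (m+1)).comp (measurable_id : Measurable (id : ℝ → ℝ))
          hGmeas
        rw [hGT]
        exact h2
      -- joint law of the triple
      haveI : IsProbabilityMeasure (Measure.map Wm P) :=
        Measure.isProbabilityMeasure_map hWmmeas.aemeasurable
      set γW := Measure.map Wm P with hγWdef
      set γa := gaussianReal μ (vr / ((m : ℝ) + 1)).toNNReal with hγadef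
      set γb := gaussianReal μ vr.toNNReal with hγbdef
      have hρ : Measure.map (fun ω => (X (m+1) ω, (sampleMean X (m+1) ω, Wm ω))) P
          = γb.prod (γa.prod γW) := by
        rw [(indepFun_iff_map_prod_eq_prod_map_map (hmeas (m+1)).aemeasurable
            ((hMmeas (m+1)).prodMk hWmmeas).aemeasurable).1 hIndep1, hdist (m+1), IH]
      -- rotation parameters
      set α : ℝ := ((m : ℝ) + 1)/((m : ℝ) + 2) with hαdef
      set β : ℝ := 1/((m : ℝ) + 2) with hβdef
      have hm2 : ((m : ℝ) + 2) ≠ 0 := by positivity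
      have hm1 : ((m : ℝ) + 1) ≠ 0 := by positivity
      have ha : 0 < vr / ((m : ℝ) + 1) := by positivity
      have hD : α * 1 - β * (-1) ≠ 0 := by
        have h : α * 1 - β * (-1) = 1 := by rw [hαdef, hβdef]; field_simp; ring
        rw [h]; exact one_ne_zero
      have horth : α * (-1) * (vr / ((m : ℝ) + 1)) + β * 1 * vr = 0 := by
        rw [hαdef, hβdef]; field_simp; ring
      have ha' : 0 < α^2 * (vr / ((m : ℝ) + 1)) + β^2 * vr := by
        rw [hαdef, hβdef]; positivity
      have hb' : 0 < (-1:ℝ)^2 * (vr / ((m : ℝ) + 1)) + (1:ℝ)^2 * vr := by positivity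
      have hvar1 : α^2 * (vr / ((m : ℝ) + 1)) + β^2 * vr = vr / ((m : ℝ) + 2) := by
        rw [hαdef, hβdef]; field_simp; ring
      have hmean1 : α * μ + β * μ = μ := by rw [hαdef, hβdef]; field_simp; ring
      have hmean2 : (-1 : ℝ) * μ + 1 * μ = 0 := by ring
      set γ' := gaussianReal μ (vr / ((m : ℝ) + 2)).toNNReal with hγ'def
      set γZ := gaussianReal 0 ((-1:ℝ)^2 * (vr / ((m : ℝ) + 1)) + (1:ℝ)^2 * vr).toNNReal with hγZdef
      have hrot : Measure.map (fun x : ℝ × ℝ => (α * x.1 + β * x.2, (-1) * x.1 + 1 * x.2))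
          (γa.prod γb) = γ'.prod γZ := by
        rw [hγadef, hγbdef, hγ'def, hγZdef]
        have := gaussian_rot (α := α) (β := β) (γ := (-1:ℝ)) (δ := (1:ℝ)) μ μ ha hvr hD horth ha' hb'
        rw [hmean1, hmean2, hvar1] at this
        exact this
      have hTlinmeas : Measurable (fun x : ℝ × ℝ => (α * x.1 + β * x.2, (-1) * x.1 + 1 * x.2)) :=
        ((measurable_fst.const_mul α).add (measurable_snd.const_mul β)).prodMk
          ((measurable_fst.const_mul (-1)).add (measurable_snd.const_mul 1))
      -- the law of the triple (mean, (Wm, Z))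
      have hsM : ∀ ω, sampleMean X (m+1+1) ω = α * sampleMean X (m+1) ω + β * X (m+1) ω := by
        intro ω; rw [hαdef, hβdef]; exact sampleMean_succ X m ω
      have hbigmeas : Measurable (fun ω => (sampleMean X (m+1+1) ω, (Wm ω, Z ω))) :=
        (hMmeas _).prodMk (hWmmeas.prodMk hZmeas)
      have hφmidmeas : Measurable (fun p : ℝ × (ℝ × (Fin m → ℝ)) =>
          (α * p.2.1 + β * p.1, (p.2.2, p.1 - p.2.1))) :=
        (((measurable_snd.comp measurable_id).fst.const_mul α).add
          (measurable_fst.const_mul β)).prodMk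
          (measurable_snd.snd.prodMk (measurable_fst.sub measurable_snd.fst))
      have hφ : (fun ω => (sampleMean X (m+1+1) ω, (Wm ω, Z ω)))
          = (fun p : ℝ × (ℝ × (Fin m → ℝ)) => (α * p.2.1 + β * p.1, (p.2.2, p.1 - p.2.1)))
            ∘ (fun ω => (X (m+1) ω, (sampleMean X (m+1) ω, Wm ω))) := by
        funext ω; exact Prod.ext (hsM ω) rfl
      have hsh1meas : Measurable (fun p : ℝ × (ℝ × (Fin m → ℝ)) => ((p.2.1, p.1), p.2.2)) :=
        (measurable_snd.fst.prodMk measurable_fst).prodMk measurable_snd.snd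
      have hφ3meas : Measurable (fun r : (ℝ × ℝ) × (Fin m → ℝ) => (r.1.1, (r.2, r.1.2))) :=
        measurable_fst.fst.prodMk (measurable_snd.prodMk measurable_fst.snd)
      have hmid : (fun p : ℝ × (ℝ × (Fin m → ℝ)) => (α * p.2.1 + β * p.1, (p.2.2, p.1 - p.2.1)))
          = (fun r : (ℝ × ℝ) × (Fin m → ℝ) => (r.1.1, (r.2, r.1.2)))
            ∘ ((Prod.map (fun x : ℝ × ℝ => (α * x.1 + β * x.2, (-1) * x.1 + 1 * x.2)) id)
            ∘ (fun p : ℝ × (ℝ × (Fin m → ℝ)) => ((p.2.1, p.1), p.2.2))) := by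
        funext p
        refine Prod.ext rfl (Prod.ext rfl ?_)
        show p.1 - p.2.1 = (-1) * p.2.1 + 1 * p.1
        ring
      have hbig : Measure.map (fun ω => (sampleMean X (m+1+1) ω, (Wm ω, Z ω))) P
          = γ'.prod (γW.prod γZ) := by
        rw [hφ, ← Measure.map_map hφmidmeas
          ((hmeas (m+1)).prodMk ((hMmeas (m+1)).prodMk hWmmeas)), hρ, hmid,
          ← Function.comp_assoc,
          ← Measure.map_map (hφ3meas.comp (hTlinmeas.prodMap measurable_id)) hsh1meas,
          shuffle1 γb γa γW,
          ← Measure.map_map hφ3meas (hTlinmeas.prodMap measurable_id),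
          ← Measure.map_prod_map _ _ hTlinmeas measurable_id,
          Measure.map_id, hrot]
        exact shuffle3 γ' γZ γW
      -- snoc
      set snocF : (Fin m → ℝ) × ℝ → (Fin (m+1) → ℝ) := fun p => fun j : Fin (m+1) =>
        if h : (j : ℕ) < m then p.1 ⟨(j : ℕ), h⟩ else p.2 with hsnocdef
      have hsnocmeas : Measurable snocF := by
        refine measurable_pi_lambda _ fun j => ?_
        by_cases h : (j : ℕ) < m
        · simp only [hsnocdef, dif_pos h]
          exact (measurable_pi_apply _).comp measurable_fst
        · simp only [hsnocdef, dif_neg h]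
          exact measurable_snd
      have hWs_eq : Ws = snocF ∘ (fun ω => (Wm ω, Z ω)) := by
        funext ω j
        by_cases h : (j : ℕ) < m
        · show X ((j : ℕ) + 1) ω - sampleMean X ((j : ℕ) + 1) ω = _
          simp only [Function.comp_apply, hsnocdef, dif_pos h]
          rfl
        · have hj : (j : ℕ) = m := by omega
          show X ((j : ℕ) + 1) ω - sampleMean X ((j : ℕ) + 1) ω = _
          simp only [Function.comp_apply, hsnocdef, dif_neg h]
          rw [hj]
      have hsnd : Measure.map (fun ω => (Wm ω, Z ω)) P = γW.prod γZ := by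
        have h1 : (fun ω => (Wm ω, Z ω))
            = Prod.snd ∘ (fun ω => (sampleMean X (m+1+1) ω, (Wm ω, Z ω))) := rfl
        rw [h1, ← Measure.map_map measurable_snd hbigmeas, hbig, Measure.map_snd_prod]
        simp
      have hWsmap : Measure.map Ws P = Measure.map snocF (γW.prod γZ) := by
        rw [hWs_eq, ← Measure.map_map hsnocmeas (hWmmeas.prodMk hZmeas), hsnd]
      have hpairWs : (fun ω => (sampleMean X (m+1+1) ω, Ws ω))
          = (Prod.map id snocF) ∘ (fun ω => (sampleMean X (m+1+1) ω, (Wm ω, Z ω))) := by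
        funext ω
        refine Prod.ext rfl ?_
        show Ws ω = snocF (Wm ω, Z ω)
        rw [hWs_eq]
        rfl
      have hcast : vr / ((↑(m+1) : ℝ) + 1) = vr / ((m : ℝ) + 2) := by push_cast; ring_nf
      show Measure.map (fun ω => (sampleMean X (m+1+1) ω, Ws ω)) P
          = (gaussianReal μ (vr / ((↑(m+1) : ℝ) + 1)).toNNReal).prod (Measure.map Ws P)
      rw [hcast, hpairWs, ← Measure.map_map (measurable_id.prodMap hsnocmeas) hbigmeas, hbig,
        ← Measure.map_prod_map _ _ measurable_id hsnocmeas, Measure.map_id, hWsmap]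
end Main

section Var
variable {Ω : Type*}

lemma sumsq_succ (X : ℕ → Ω → ℝ) (m : ℕ) (ω : Ω) :
    ∑ i ∈ Finset.range (m+2), (X i ω - sampleMean X (m+2) ω)^2
      = (∑ i ∈ Finset.range (m+1), (X i ω - sampleMean X (m+1) ω)^2)
        + (((m:ℝ)+1)/((m:ℝ)+2)) * (X (m+1) ω - sampleMean X (m+1) ω)^2 := by
  have hm1 : ((m:ℝ)+1) ≠ 0 := by positivity
  have hm2 : ((m:ℝ)+2) ≠ 0 := by positivity
  set s : ℝ := ∑ i ∈ Finset.range (m+1), X i ω with hs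
  set x : ℝ := X (m+1) ω with hx
  set A : ℝ := sampleMean X (m+1) ω with hA
  set B : ℝ := sampleMean X (m+2) ω with hB
  have hAval : A = s / ((m:ℝ)+1) := by
    rw [hA, sampleMean]; push_cast; rfl
  have hBval : B = (s + x) / ((m:ℝ)+2) := by
    rw [hB, sampleMean, Finset.sum_range_succ]; push_cast; rfl
  have key : ∀ i : ℕ, (X i ω - B)^2 = (X i ω - A)^2 + ((A - B) * (2 * X i ω - A - B)) := by
    intro i; ring
  rw [Finset.sum_range_succ, Finset.sum_congr rfl (fun i _ => key i), Finset.sum_add_distrib,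
    ← Finset.mul_sum]
  have hsum : ∑ i ∈ Finset.range (m+1), (2 * X i ω - A - B)
      = 2 * s - ((m:ℝ)+1) * (A + B) := by
    have h1 : ∀ i : ℕ, 2 * X i ω - A - B = 2 * X i ω - (A + B) := fun i => by ring
    rw [Finset.sum_congr rfl (fun i _ => h1 i), Finset.sum_sub_distrib, ← Finset.mul_sum,
      Finset.sum_const, Finset.card_range]
    push_cast; ring
  rw [hsum]
  have hgoal : (A - B) * (2 * s - ((m:ℝ)+1) * (A + B)) + (x - B)^2
      = (((m:ℝ)+1)/((m:ℝ)+2)) * (x - A)^2 := by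
    rw [hAval, hBval]
    field_simp
    ring
  linarith [hgoal]

lemma sumsq_eq (X : ℕ → Ω → ℝ) : ∀ (m : ℕ) (ω : Ω),
    ∑ i ∈ Finset.range (m+1), (X i ω - sampleMean X (m+1) ω)^2
      = ∑ j ∈ Finset.range m, (((j:ℝ)+1)/((j:ℝ)+2))
          * (X (j+1) ω - sampleMean X (j+1) ω)^2 := by
  intro m
  induction m with
  | zero =>
      intro ω
      simp [sampleMean]
  | succ m IH =>
      intro ω
      rw [show m + 1 + 1 = m + 2 from rfl, sumsq_succ X m ω, IH ω, Finset.sum_range_succ]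
end Var

theorem sampleMean_indep_sampleVars
    {Ω : Type*} [MeasurableSpace Ω] (P : Measure Ω) [IsProbabilityMeasure P]
    (X : ℕ → Ω → ℝ) (μ σ : ℝ) (hσ : 0 < σ)
    (hmeas : ∀ i, Measurable (X i))
    (hindep : iIndepFun X P)
    (hdist : ∀ i, Measure.map (X i) P = gaussianReal μ (Real.toNNReal (σ ^ 2)))
    (n : ℕ) (hn : 2 ≤ n) :
    IndepFun (sampleMean X n)
      (fun ω => fun k : Fin (n - 1) => sampleVar X ((k : ℕ) + 2) ω) P := by
  obtain ⟨m, rfl⟩ : ∃ m, n = m + 2 := ⟨n - 2, by omega⟩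
  have hMmeas : ∀ k, Measurable (sampleMean X k) := sampleMean_measurable hmeas
  set W : Ω → (Fin (m+1) → ℝ) := fun ω => fun j : Fin (m+1) =>
    X ((j : ℕ) + 1) ω - sampleMean X ((j : ℕ) + 1) ω with hWdef
  have hWmeas : Measurable W := measurable_pi_lambda _ fun j => (hmeas _).sub (hMmeas _)
  haveI : IsProbabilityMeasure (Measure.map W P) :=
    Measure.isProbabilityMeasure_map hWmeas.aemeasurable
  have hHel := helmert_induction P X μ (σ^2) (by positivity) hmeas hindep hdist (m+1)
  have hMfst : Measure.map (sampleMean X (m+1+1)) P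
      = gaussianReal μ ((σ^2) / ((↑(m+1) : ℝ) + 1)).toNNReal := by
    have h1 : sampleMean X (m+1+1)
        = Prod.fst ∘ (fun ω => (sampleMean X (m+1+1) ω, W ω)) := rfl
    rw [h1, ← Measure.map_map measurable_fst ((hMmeas _).prodMk hWmeas), hHel,
      Measure.map_fst_prod]
    simp
  have hIndepMW : IndepFun (sampleMean X (m+1+1)) W P := by
    refine (indepFun_iff_map_prod_eq_prod_map_map (hMmeas _).aemeasurable
      hWmeas.aemeasurable).2 ?_
    rw [hMfst]
    exact hHel
  -- express the sample variances as a function of W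
  set F : (Fin (m+1) → ℝ) → (Fin (m+1) → ℝ) := fun z => fun k : Fin (m+1) =>
    (∑ j ∈ Finset.range ((k : ℕ) + 1), (((j:ℝ)+1)/((j:ℝ)+2))
      * (if h : j < m+1 then z ⟨j, h⟩ else 0)^2) / (((k : ℕ) : ℝ) + 1) with hFdef
  have hFmeas : Measurable F := by
    refine measurable_pi_lambda _ fun k => ?_
    apply Measurable.div_const
    apply Finset.measurable_sum
    intro j _
    by_cases h : j < m + 1
    · simp only [dif_pos h]
      exact ((measurable_pi_apply _).pow_const 2).const_mul _
    · simp only [dif_neg h]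
      exact measurable_const
  have hcomp : (fun ω => fun k : Fin (m + 2 - 1) => sampleVar X ((k : ℕ) + 2) ω) = F ∘ W := by
    funext ω k
    show sampleVar X ((k : ℕ) + 2) ω = _
    rw [sampleVar, sumsq_eq X ((k : ℕ) + 1) ω]
    have hd : ((((k : ℕ) + 2 : ℕ)) : ℝ) - 1 = ((k : ℕ) : ℝ) + 1 := by push_cast; ring
    rw [hd]
    congr 1
    refine Finset.sum_congr rfl fun j hj => ?_
    have hj' : j < m + 1 := by
      have h1 := Finset.mem_range.1 hj
      have h2 := k.isLt
      omega
    rw [dif_pos hj']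
  rw [hcomp]
  exact hIndepMW.comp measurable_id hFmeas
end

section
/- For each positive integer T let g_T : {0, 1, …, T} → (0, ∞) be a function (extended to all nonnegative integers). Suppose there exists a function g* : [0,1] → ℝ such that the functions α ↦ (1/T) log g_T(⌊αT⌋) converge uniformly on [0,1] to g* as T → ∞. Then lim_{T→∞} (1/T) log ( ∑_{k=0}^T g_T(k) ) = sup_{α ∈ [0,1]} g*(α). -/
open MeasureTheory Real Filter

theorem log_sum_limit_of_uniform_convergence
    (g : ℕ → ℕ → ℝ) (hg : ∀ T k, 0 < g T k) (gstar : ℝ → ℝ)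
    (hunif : TendstoUniformlyOn
      (fun (T : ℕ) (α : ℝ) => (1 / (T : ℝ)) * Real.log (g T ⌊α * (T : ℝ)⌋₊))
      gstar atTop (Set.Icc (0 : ℝ) 1)) :
    Tendsto
      (fun T : ℕ => (1 / (T : ℝ)) * Real.log (∑ k ∈ Finset.range (T + 1), g T k))
      atTop (nhds (sSup (gstar '' Set.Icc (0 : ℝ) 1))) := by
  set F : ℕ → ℝ → ℝ := fun T α => (1 / (T : ℝ)) * Real.log (g T ⌊α * (T : ℝ)⌋₊) with hF
  set S : ℕ → ℝ := fun T => ∑ k ∈ Finset.range (T + 1), g T k with hS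
  set M : ℝ := sSup (gstar '' Set.Icc (0 : ℝ) 1) with hMdef
  have hSpos : ∀ T, 0 < S T := fun T =>
    Finset.sum_pos (fun k _ => hg T k) ⟨0, Finset.mem_range.mpr (Nat.succ_pos T)⟩
  have hterm : ∀ T k, k ≤ T → g T k ≤ S T := fun T k hk =>
    Finset.single_le_sum (fun j _ => (hg T j).le) (Finset.mem_range.mpr (Nat.lt_succ_of_le hk))
  have hfloor : ∀ (T : ℕ) (α : ℝ), α ∈ Set.Icc (0:ℝ) 1 → ⌊α * (T:ℝ)⌋₊ ≤ T := by
    intro T α hα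
    have h : α * (T:ℝ) ≤ (T:ℝ) := mul_le_of_le_one_left (Nat.cast_nonneg T) hα.2
    calc ⌊α * (T:ℝ)⌋₊ ≤ ⌊(T:ℝ)⌋₊ := Nat.floor_mono h
      _ = T := Nat.floor_natCast T
  have hFle : ∀ (T : ℕ) (α : ℝ), α ∈ Set.Icc (0:ℝ) 1 →
      F T α ≤ (1/(T:ℝ)) * Real.log (S T) := by
    intro T α hα
    apply mul_le_mul_of_nonneg_left _ (by positivity)
    exact Real.log_le_log (hg T _) (hterm T _ (hfloor T α hα))
  have hne : (gstar '' Set.Icc (0:ℝ) 1).Nonempty :=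
    ⟨gstar 0, 0, Set.mem_Icc.mpr ⟨le_refl 0, zero_le_one⟩, rfl⟩
  -- boundedness above of the image of gstar
  have hbdd : BddAbove (gstar '' Set.Icc (0:ℝ) 1) := by
    obtain ⟨T, hT1, _⟩ :=
      ((Metric.tendstoUniformlyOn_iff.mp hunif 1 one_pos).and (eventually_ge_atTop 1)).exists
    refine ⟨(1/(T:ℝ)) * Real.log (S T) + 1, ?_⟩
    rintro y ⟨α, hα, rfl⟩
    have h := hT1 α hα
    rw [Real.dist_eq] at h
    have h2 := abs_lt.mp h
    have h3 := hFle T α hα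
    linarith [h2.1, h2.2]
  -- log (T+1) / T → 0
  have hlog : Tendsto (fun T : ℕ => Real.log ((T:ℝ)+1) / (T:ℝ)) atTop (nhds 0) := by
    have h1 : Tendsto (fun x : ℝ => Real.log x / x) atTop (nhds 0) :=
      Real.isLittleO_log_id_atTop.tendsto_div_nhds_zero
    have h2 : Tendsto (fun T : ℕ => (T:ℝ)+1) atTop atTop :=
      tendsto_atTop_add_const_right _ 1 tendsto_natCast_atTop_atTop
    have h3 : Tendsto (fun T : ℕ => Real.log ((T:ℝ)+1) / ((T:ℝ)+1)) atTop (nhds 0) :=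
      h1.comp h2
    have h4 : Tendsto (fun T : ℕ => ((T:ℝ)+1) / (T:ℝ)) atTop (nhds 1) := by
      have h5 : Tendsto (fun T : ℕ => 1 + ((T:ℝ))⁻¹) atTop (nhds 1) := by
        have := tendsto_const_nhds (x := (1:ℝ)) (f := atTop (α := ℕ))
          |>.add (tendsto_inv_atTop_zero.comp tendsto_natCast_atTop_atTop)
        simpa using this
      apply h5.congr'
      filter_upwards [eventually_ge_atTop 1] with T hT
      have hT0 : (T:ℝ) ≠ 0 := Nat.cast_ne_zero.mpr (by omega)
      field_simp
    have h6 := h3.mul h4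
    rw [zero_mul] at h6
    apply h6.congr'
    filter_upwards [eventually_ge_atTop 1] with T hT
    have hT0 : (T:ℝ) ≠ 0 := Nat.cast_ne_zero.mpr (by omega)
    have hT1 : (T:ℝ)+1 ≠ 0 := by positivity
    field_simp
  rw [Metric.tendsto_nhds]
  intro ε hε
  obtain ⟨α₀, hα₀mem, hα₀⟩ : ∃ α ∈ Set.Icc (0:ℝ) 1, M - ε/4 < gstar α := by
    obtain ⟨y, hy, hy'⟩ := exists_lt_of_lt_csSup hne (show M - ε/4 < M by linarith)
    obtain ⟨α, hα, rfl⟩ := hy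
    exact ⟨α, hα, hy'⟩
  have hev := Metric.tendstoUniformlyOn_iff.mp hunif (ε/4) (by linarith)
  have hlogev : ∀ᶠ T : ℕ in atTop, Real.log ((T:ℝ)+1) / (T:ℝ) < ε/4 :=
    hlog.eventually_lt_const (by linarith)
  filter_upwards [hev, eventually_ge_atTop 1, hlogev] with T hT hT1 hTlog
  have hTpos : (0:ℝ) < (T:ℝ) := by exact_mod_cast Nat.lt_of_lt_of_le Nat.zero_lt_one hT1
  -- lower bound
  have hlow : M - ε/2 < (1/(T:ℝ)) * Real.log (S T) := by
    have h1 := hT α₀ hα₀mem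
    rw [Real.dist_eq] at h1
    have h2 := abs_lt.mp h1
    have h3 := hFle T α₀ hα₀mem
    linarith [h2.1, h2.2]
  -- upper bound
  have hup : (1/(T:ℝ)) * Real.log (S T) < M + ε/2 := by
    have hbound : ∀ k ∈ Finset.range (T+1), g T k ≤ Real.exp ((T:ℝ) * (M + ε/4)) := by
      intro k hk
      have hkT : k ≤ T := Nat.lt_succ_iff.mp (Finset.mem_range.mp hk)
      have hmem : (k:ℝ)/(T:ℝ) ∈ Set.Icc (0:ℝ) 1 := by
        constructor
        · positivity
        · rw [div_le_one hTpos]; exact_mod_cast hkT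
      have hfl : ⌊(k:ℝ)/(T:ℝ) * (T:ℝ)⌋₊ = k := by
        rw [div_mul_cancel₀ _ (ne_of_gt hTpos), Nat.floor_natCast]
      have h1 := hT _ hmem
      rw [Real.dist_eq] at h1
      have h2 := abs_lt.mp h1
      have h3 : gstar ((k:ℝ)/(T:ℝ)) ≤ M := le_csSup hbdd ⟨_, hmem, rfl⟩
      have h4 : F T ((k:ℝ)/(T:ℝ)) = (1/(T:ℝ)) * Real.log (g T k) := by
        simp only [hF, hfl]
      have h6 : (1/(T:ℝ)) * Real.log (g T k) < M + ε/4 := by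
        rw [← h4]; linarith [h2.1, h2.2]
      have h5 : Real.log (g T k) < (T:ℝ) * (M + ε/4) := by
        have heq : Real.log (g T k) = (T:ℝ) * ((1/(T:ℝ)) * Real.log (g T k)) := by
          field_simp
        rw [heq]
        exact mul_lt_mul_of_pos_left h6 hTpos
      calc g T k = Real.exp (Real.log (g T k)) := (Real.exp_log (hg T k)).symm
        _ ≤ Real.exp ((T:ℝ)*(M+ε/4)) := Real.exp_le_exp.mpr h5.le
    have hSle : S T ≤ ((T:ℝ)+1) * Real.exp ((T:ℝ)*(M+ε/4)) := by
      calc S T ≤ ∑ _k ∈ Finset.range (T+1), Real.exp ((T:ℝ)*(M+ε/4)) :=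
          Finset.sum_le_sum hbound
        _ = ((T:ℝ)+1) * Real.exp ((T:ℝ)*(M+ε/4)) := by
          rw [Finset.sum_const, Finset.card_range]
          ring
    have hlogS : Real.log (S T) ≤ Real.log ((T:ℝ)+1) + (T:ℝ)*(M+ε/4) := by
      calc Real.log (S T) ≤ Real.log (((T:ℝ)+1) * Real.exp ((T:ℝ)*(M+ε/4))) :=
          Real.log_le_log (hSpos T) hSle
        _ = Real.log ((T:ℝ)+1) + (T:ℝ)*(M+ε/4) := by
          rw [Real.log_mul (by positivity) (Real.exp_ne_zero _), Real.log_exp]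
    have h7 : (1/(T:ℝ)) * Real.log (S T) ≤ Real.log ((T:ℝ)+1)/(T:ℝ) + (M+ε/4) := by
      calc (1/(T:ℝ)) * Real.log (S T)
          ≤ (1/(T:ℝ)) * (Real.log ((T:ℝ)+1) + (T:ℝ)*(M+ε/4)) :=
          mul_le_mul_of_nonneg_left hlogS (by positivity)
        _ = Real.log ((T:ℝ)+1)/(T:ℝ) + (M+ε/4) := by
          field_simp
    linarith
  rw [Real.dist_eq, abs_lt]
  constructor <;> [skip; skip] <;> simp only [hS] at hlow hup ⊢ <;> linarith
end

section
/- Let μ₁ > μ₂, δ := μ₁ − μ₂, σ₁, σ₂ > 0, and p ∈ (0,1). Define for each positive integer T the quantity PFS(T) := ∑_{k=0}^T [1 − Φ( δ / √( σ₁²/(k+1) + σ₂²/(T−k+1) ) )] · C(T,k) p^k (1−p)^{T−k}. Then PFS(T) ≥ [1 − Φ( δ / √( σ₁² + σ₂²/(T+1) ) )] · (1−p)^T for all T, and consequently −limsup_{T→∞} (1/T) log PFS(T) ≤ −log(1−p); in particular the large deviations rate of PFS is bounded above by −log(1−p) uniformly in δ. -/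
open MeasureTheory ProbabilityTheory Real Filter
open scoped ENNReal NNReal

/-- The standard normal cumulative distribution function Φ. -/
noncomputable def stdNormalCDF (x : ℝ) : ℝ :=
  ((gaussianReal 0 1) (Set.Iic x)).toReal

/-- Probability of false selection of the randomized static allocation algorithm. -/
noncomputable def PFSrs (δ σ₁ σ₂ p : ℝ) (T : ℕ) : ℝ :=
  ∑ k ∈ Finset.range (T + 1),
    (1 - stdNormalCDF (δ / Real.sqrt (σ₁ ^ 2 / ((k : ℝ) + 1) + σ₂ ^ 2 / (((T : ℝ) - (k : ℝ)) + 1))))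
      * (T.choose k : ℝ) * p ^ k * (1 - p) ^ (T - k)

lemma stdNormalCDF_nonneg (x : ℝ) : 0 ≤ stdNormalCDF x := ENNReal.toReal_nonneg

lemma stdNormalCDF_le_one (x : ℝ) : stdNormalCDF x ≤ 1 := by
  have h : (gaussianReal 0 1) (Set.Iic x) ≤ 1 := prob_le_one
  calc stdNormalCDF x ≤ (1 : ℝ≥0∞).toReal :=
        ENNReal.toReal_mono (by simp) h
    _ = 1 := by simp

lemma stdNormalCDF_mono {x y : ℝ} (h : x ≤ y) : stdNormalCDF x ≤ stdNormalCDF y := by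
  refine ENNReal.toReal_mono (measure_ne_top _ _) (measure_mono ?_)
  exact Set.Iic_subset_Iic.mpr h

lemma stdNormalCDF_lt_one (x : ℝ) : stdNormalCDF x < 1 := by
  have huniv : (gaussianReal 0 1) Set.univ = 1 := measure_univ
  have hlt : (gaussianReal 0 1) (Set.Iic x) < 1 := by
    by_contra hge
    push_neg at hge
    have heq : (gaussianReal 0 1) (Set.Iic x) = 1 := le_antisymm prob_le_one hge
    have hIoi : (gaussianReal 0 1) (Set.Ioi x) = 0 := by
      have hsum := measure_add_measure_compl (μ := gaussianReal 0 1) (measurableSet_Iic (a := x))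
      rw [Set.compl_Iic, huniv, heq] at hsum
      have h1 : (1 : ℝ≥0∞) ≠ ⊤ := by simp
      have : (1:ℝ≥0∞) + (gaussianReal 0 1) (Set.Ioi x) = 1 + 0 := by simpa using hsum
      exact (ENNReal.add_right_inj h1).mp this
    -- show measure of Ioi x is positive : contradiction
    have hne : ((1 : ℝ≥0)) ≠ 0 := one_ne_zero
    rw [gaussianReal_of_var_ne_zero _ hne, withDensity_apply _ measurableSet_Ioi] at hIoi
    rw [lintegral_eq_zero_iff (measurable_gaussianPDF 0 1)] at hIoi
    have h' := (ae_restrict_iff' measurableSet_Ioi).mp hIoi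
    have hnull : volume {a : ℝ | ¬ (a ∈ Set.Ioi x → gaussianPDF 0 1 a = (0 : ℝ → ℝ≥0∞) a)} = 0 :=
      ae_iff.mp h'
    have hsub : Set.Ioi x ⊆ {a : ℝ | ¬ (a ∈ Set.Ioi x → gaussianPDF 0 1 a = (0 : ℝ → ℝ≥0∞) a)} := by
      intro a ha
      simp only [Set.mem_setOf_eq, Pi.zero_apply]
      intro h
      exact (gaussianPDF_pos 0 hne a).ne' (h ha)
    have : volume (Set.Ioi x) = 0 := measure_mono_null hsub hnull
    simp [Real.volume_Ioi] at this
  calc stdNormalCDF x < (1 : ℝ≥0∞).toReal := by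
        refine ENNReal.toReal_strict_mono (by simp) hlt
    _ = 1 := by simp

theorem RS_LD_rate_upper_bound
    (μ₁ μ₂ σ₁ σ₂ p : ℝ) (hμ : μ₂ < μ₁) (hσ₁ : 0 < σ₁) (hσ₂ : 0 < σ₂)
    (hp₀ : 0 < p) (hp₁ : p < 1) (δ : ℝ) (hδ : δ = μ₁ - μ₂) :
    (∀ T : ℕ,
      PFSrs δ σ₁ σ₂ p T ≥
        (1 - stdNormalCDF (δ / Real.sqrt (σ₁ ^ 2 + σ₂ ^ 2 / ((T : ℝ) + 1)))) * (1 - p) ^ T) ∧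
    Real.log (1 - p) ≤
      Filter.limsup (fun T : ℕ => (1 / (T : ℝ)) * Real.log (PFSrs δ σ₁ σ₂ p T)) atTop := by
  have hδpos : 0 < δ := by rw [hδ]; linarith
  have hq : 0 < 1 - p := by linarith
  -- nonnegativity of each summand
  have hterm_nonneg : ∀ (T k : ℕ),
      0 ≤ (1 - stdNormalCDF (δ / Real.sqrt (σ₁ ^ 2 / ((k : ℝ) + 1) + σ₂ ^ 2 / (((T : ℝ) - (k : ℝ)) + 1))))
        * (T.choose k : ℝ) * p ^ k * (1 - p) ^ (T - k) := by
    intro T k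
    have h1 : 0 ≤ 1 - stdNormalCDF (δ / Real.sqrt (σ₁ ^ 2 / ((k : ℝ) + 1) + σ₂ ^ 2 / (((T : ℝ) - (k : ℝ)) + 1))) := by
      linarith [stdNormalCDF_le_one (δ / Real.sqrt (σ₁ ^ 2 / ((k : ℝ) + 1) + σ₂ ^ 2 / (((T : ℝ) - (k : ℝ)) + 1)))]
    positivity
  -- Part 1
  have part1 : ∀ T : ℕ,
      PFSrs δ σ₁ σ₂ p T ≥
        (1 - stdNormalCDF (δ / Real.sqrt (σ₁ ^ 2 + σ₂ ^ 2 / ((T : ℝ) + 1)))) * (1 - p) ^ T := by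
    intro T
    have hmem : (0 : ℕ) ∈ Finset.range (T + 1) := Finset.mem_range.mpr (Nat.succ_pos T)
    have := Finset.single_le_sum (f := fun k : ℕ =>
      (1 - stdNormalCDF (δ / Real.sqrt (σ₁ ^ 2 / ((k : ℝ) + 1) + σ₂ ^ 2 / (((T : ℝ) - (k : ℝ)) + 1))))
        * (T.choose k : ℝ) * p ^ k * (1 - p) ^ (T - k))
      (fun k _ => hterm_nonneg T k) hmem
    simpa [PFSrs, ge_iff_le] using this
  refine ⟨part1, ?_⟩
  -- constant lower bound on the tail probability
  set c : ℝ := 1 - stdNormalCDF (δ / σ₁) with hc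
  have hcpos : 0 < c := by
    have h := stdNormalCDF_lt_one (δ / σ₁)
    rw [hc]; linarith
  have hlb : ∀ T : ℕ, c ≤ 1 - stdNormalCDF (δ / Real.sqrt (σ₁ ^ 2 + σ₂ ^ 2 / ((T : ℝ) + 1))) := by
    intro T
    have hT1 : (0 : ℝ) < (T : ℝ) + 1 := by positivity
    have hsum : σ₁ ^ 2 ≤ σ₁ ^ 2 + σ₂ ^ 2 / ((T : ℝ) + 1) := le_add_of_nonneg_right (by positivity)
    have hsqrt : σ₁ ≤ Real.sqrt (σ₁ ^ 2 + σ₂ ^ 2 / ((T : ℝ) + 1)) := by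
      have := Real.sqrt_le_sqrt hsum
      rwa [Real.sqrt_sq hσ₁.le] at this
    have hdiv : δ / Real.sqrt (σ₁ ^ 2 + σ₂ ^ 2 / ((T : ℝ) + 1)) ≤ δ / σ₁ :=
      div_le_div_of_nonneg_left hδpos.le hσ₁ hsqrt
    have := stdNormalCDF_mono hdiv
    simp only [hc]
    linarith
  have hPFSpos : ∀ T : ℕ, 0 < PFSrs δ σ₁ σ₂ p T := by
    intro T
    have h1 := part1 T
    have h3 : 0 < 1 - stdNormalCDF (δ / Real.sqrt (σ₁ ^ 2 + σ₂ ^ 2 / ((T : ℝ) + 1))) :=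
      lt_of_lt_of_le hcpos (hlb T)
    have h2 : 0 < (1 - stdNormalCDF (δ / Real.sqrt (σ₁ ^ 2 + σ₂ ^ 2 / ((T : ℝ) + 1)))) * (1 - p) ^ T :=
      mul_pos h3 (pow_pos hq T)
    exact lt_of_lt_of_le h2 h1
  have hPFS_lb : ∀ T : ℕ, c * (1 - p) ^ T ≤ PFSrs δ σ₁ σ₂ p T := by
    intro T
    have h1 := part1 T
    have h2 : c * (1 - p) ^ T ≤ (1 - stdNormalCDF (δ / Real.sqrt (σ₁ ^ 2 + σ₂ ^ 2 / ((T : ℝ) + 1)))) * (1 - p) ^ T :=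
      mul_le_mul_of_nonneg_right (hlb T) (by positivity)
    exact le_trans h2 h1
  -- upper bound PFS ≤ 1, hence f ≤ 0
  have hPFS_le_one : ∀ T : ℕ, PFSrs δ σ₁ σ₂ p T ≤ 1 := by
    intro T
    have hsum : PFSrs δ σ₁ σ₂ p T ≤
        ∑ k ∈ Finset.range (T + 1), p ^ k * (1 - p) ^ (T - k) * (T.choose k : ℝ) := by
      refine Finset.sum_le_sum fun k _ => ?_
      have h1 : 1 - stdNormalCDF (δ / Real.sqrt (σ₁ ^ 2 / ((k : ℝ) + 1) + σ₂ ^ 2 / (((T : ℝ) - (k : ℝ)) + 1))) ≤ 1 := by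
        linarith [stdNormalCDF_nonneg (δ / Real.sqrt (σ₁ ^ 2 / ((k : ℝ) + 1) + σ₂ ^ 2 / (((T : ℝ) - (k : ℝ)) + 1)))]
      have h2 : (0:ℝ) ≤ (T.choose k : ℝ) * p ^ k * (1 - p) ^ (T - k) := by positivity
      calc (1 - stdNormalCDF (δ / Real.sqrt (σ₁ ^ 2 / ((k : ℝ) + 1) + σ₂ ^ 2 / (((T : ℝ) - (k : ℝ)) + 1))))
            * (T.choose k : ℝ) * p ^ k * (1 - p) ^ (T - k)
          = (1 - stdNormalCDF (δ / Real.sqrt (σ₁ ^ 2 / ((k : ℝ) + 1) + σ₂ ^ 2 / (((T : ℝ) - (k : ℝ)) + 1))))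
            * ((T.choose k : ℝ) * p ^ k * (1 - p) ^ (T - k)) := by ring
        _ ≤ 1 * ((T.choose k : ℝ) * p ^ k * (1 - p) ^ (T - k)) :=
            mul_le_mul_of_nonneg_right h1 h2
        _ = p ^ k * (1 - p) ^ (T - k) * (T.choose k : ℝ) := by ring
    have hbin : ∑ k ∈ Finset.range (T + 1), p ^ k * (1 - p) ^ (T - k) * (T.choose k : ℝ) = 1 := by
      have := add_pow (p) (1 - p) T
      rw [show p + (1 - p) = 1 by ring, one_pow] at this
      exact this.symm
    linarith
  have hf_le_zero : ∀ T : ℕ, (1 / (T : ℝ)) * Real.log (PFSrs δ σ₁ σ₂ p T) ≤ 0 := by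
    intro T
    have hlog : Real.log (PFSrs δ σ₁ σ₂ p T) ≤ 0 := Real.log_nonpos (hPFSpos T).le (hPFS_le_one T)
    have : (0:ℝ) ≤ 1 / (T : ℝ) := by positivity
    exact mul_nonpos_of_nonneg_of_nonpos this hlog
  -- lower bound function g
  set g : ℕ → ℝ := fun T => Real.log (1 - p) + (1 / (T : ℝ)) * Real.log c with hg
  have hgle : ∀ᶠ T in atTop, g T ≤ (1 / (T : ℝ)) * Real.log (PFSrs δ σ₁ σ₂ p T) := by
    filter_upwards [eventually_ge_atTop 1] with T hT
    have hTpos : (0:ℝ) < (T:ℝ) := by exact_mod_cast hT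
    have hlog : Real.log (c * (1 - p) ^ T) ≤ Real.log (PFSrs δ σ₁ σ₂ p T) :=
      Real.log_le_log (by positivity) (hPFS_lb T)
    have hexp : Real.log (c * (1 - p) ^ T) = Real.log c + (T:ℝ) * Real.log (1 - p) := by
      rw [Real.log_mul hcpos.ne' (by positivity), Real.log_pow]
    have hTne : ((T:ℝ)) ≠ 0 := hTpos.ne'
    have h1 : g T = (1 / (T:ℝ)) * (Real.log c + (T:ℝ) * Real.log (1 - p)) := by
      rw [hg]
      field_simp
      ring
    rw [h1, ← hexp]
    exact mul_le_mul_of_nonneg_left hlog (by positivity)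
  have hgtendsto : Tendsto g atTop (nhds (Real.log (1 - p))) := by
    have h0 : Tendsto (fun T : ℕ => (1 / (T : ℝ)) * Real.log c) atTop (nhds 0) := by
      have : Tendsto (fun n : ℕ => 1 / (n : ℝ)) atTop (nhds 0) := tendsto_one_div_atTop_nhds_zero_nat
      simpa using this.mul_const (Real.log c)
    have := (tendsto_const_nhds (x := Real.log (1 - p)) (f := atTop (α := ℕ))).add h0
    simpa [hg] using this
  have hglimsup : Filter.limsup g atTop = Real.log (1 - p) := hgtendsto.limsup_eq
  have hcobdd : Filter.IsCoboundedUnder (· ≤ ·) atTop g :=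
    hgtendsto.isBoundedUnder_ge.isCoboundedUnder_le
  have hbdd : Filter.IsBoundedUnder (· ≤ ·) atTop
      (fun T : ℕ => (1 / (T : ℝ)) * Real.log (PFSrs δ σ₁ σ₂ p T)) :=
    ⟨0, Filter.eventually_map.mpr (Filter.Eventually.of_forall hf_le_zero)⟩
  calc Real.log (1 - p) = Filter.limsup g atTop := hglimsup.symm
    _ ≤ _ := Filter.limsup_le_limsup hgle hcobdd hbdd
end

section
/- Let μ₁ > μ₂, δ := μ₁ − μ₂, σ₁, σ₂ > 0, and p ∈ (0,1). Define for each positive integer T the quantity PFS(T) := 1 − Φ( δ / √( σ₁²/⌊pT⌋ + σ₂²/⌊(1−p)T⌋ ) ) (the probability of false selection of the deterministic static allocation which runs ⌊pT⌋ and ⌊(1−p)T⌋ independent normal replications of designs 1 and 2 and selects the design with larger sample mean). Then −lim_{T→∞} (1/T) log PFS(T) = δ² / ( 2( σ₁²/p + σ₂²/(1−p) ) ). -/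
open MeasureTheory ProbabilityTheory Real Filter

/-- Probability of false selection of the deterministic static allocation. -/
noncomputable def PFSds (δ σ₁ σ₂ p : ℝ) (T : ℕ) : ℝ :=
  1 - stdNormalCDF (δ / Real.sqrt
      (σ₁ ^ 2 / (⌊p * (T : ℝ)⌋₊ : ℝ) + σ₂ ^ 2 / (⌊(1 - p) * (T : ℝ)⌋₊ : ℝ)))

lemma aux_tail_eq (a : ℝ) : ((gaussianReal 0 1) (Set.Ioi a)).toReal
    = ∫ x in Set.Ioi a, gaussianPDFReal 0 1 x := by
  rw [gaussianReal_apply_eq_integral 0 one_ne_zero,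
    ENNReal.toReal_ofReal (setIntegral_nonneg measurableSet_Ioi
      fun x _ => gaussianPDFReal_nonneg 0 1 x)]

lemma aux_pdf_eq (x : ℝ) :
    gaussianPDFReal 0 1 x = (Real.sqrt (2*π))⁻¹ * Real.exp (-x^2/2) := by
  simp [gaussianPDFReal]

lemma aux_gauss_tail_le {a : ℝ} (ha : 1 ≤ a) :
    ((gaussianReal 0 1) (Set.Ioi a)).toReal ≤ Real.exp (-a^2/2) := by
  rw [aux_tail_eq]
  have h2π : 1 ≤ Real.sqrt (2*π) := by
    rw [show (1:ℝ) = Real.sqrt 1 by simp]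
    apply Real.sqrt_le_sqrt
    nlinarith [Real.pi_gt_three]
  have hint : IntegrableOn (fun x => Real.exp (-a^2/2 + a) * Real.exp (-1 * x)) (Set.Ioi a) :=
    (exp_neg_integrableOn_Ioi a one_pos).const_mul _
  calc ∫ x in Set.Ioi a, gaussianPDFReal 0 1 x
      ≤ ∫ x in Set.Ioi a, Real.exp (-a^2/2 + a) * Real.exp (-1 * x) := by
        apply setIntegral_mono_on
          ((integrable_gaussianPDFReal 0 1).integrableOn) hint measurableSet_Ioi
        intro x hx
        rw [aux_pdf_eq, ← Real.exp_add]
        have hx' : a < x := hx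
        have hkey : -x^2/2 ≤ -a^2/2 + a + -1*x := by nlinarith
        calc (Real.sqrt (2*π))⁻¹ * Real.exp (-x^2/2) ≤ 1 * Real.exp (-x^2/2) := by
              apply mul_le_mul_of_nonneg_right _ (Real.exp_nonneg _)
              exact inv_le_one_of_one_le₀ h2π
          _ = Real.exp (-x^2/2) := one_mul _
          _ ≤ _ := Real.exp_le_exp.mpr hkey
    _ = Real.exp (-a^2/2 + a) * Real.exp (-1 * a) := by
        rw [integral_const_mul]
        congr 1
        simpa using integral_exp_neg_Ioi a
    _ = Real.exp (-a^2/2) := by rw [← Real.exp_add]; ring_nf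

lemma aux_le_gauss_tail {a : ℝ} (ha : 0 ≤ a) :
    (Real.sqrt (2*π))⁻¹ * Real.exp (-(a+1)^2/2)
      ≤ ((gaussianReal 0 1) (Set.Ioi a)).toReal := by
  rw [aux_tail_eq]
  have hmono : ∫ x in Set.Ioc a (a+1), gaussianPDFReal 0 1 x
      ≤ ∫ x in Set.Ioi a, gaussianPDFReal 0 1 x := by
    apply setIntegral_mono_set ((integrable_gaussianPDFReal 0 1).integrableOn)
      (ae_of_all _ fun x => gaussianPDFReal_nonneg 0 1 x)
      (HasSubset.Subset.eventuallyLE Set.Ioc_subset_Ioi_self)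
  refine le_trans ?_ hmono
  have hconst : ∫ x in Set.Ioc a (a+1), gaussianPDFReal 0 1 (a+1)
      ≤ ∫ x in Set.Ioc a (a+1), gaussianPDFReal 0 1 x := by
    apply setIntegral_mono_on (integrableOn_const (by simp))
      ((integrable_gaussianPDFReal 0 1).integrableOn) measurableSet_Ioc
    intro x hx
    rw [aux_pdf_eq, aux_pdf_eq]
    apply mul_le_mul_of_nonneg_left _ (by positivity)
    apply Real.exp_le_exp.mpr
    have h1 := hx.1
    have h2 := hx.2
    nlinarith
  refine le_trans (le_of_eq ?_) hconst
  rw [setIntegral_const, Real.volume_real_Ioc_of_le (by linarith), smul_eq_mul, aux_pdf_eq]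
  rw [show a + 1 - a = 1 by ring]
  ring

lemma aux_one_sub_cdf (x : ℝ) :
    1 - stdNormalCDF x = ((gaussianReal 0 1) (Set.Ioi x)).toReal := by
  have h := measure_compl (μ := gaussianReal 0 1) (s := Set.Iic x)
    measurableSet_Iic (measure_ne_top _ _)
  rw [Set.compl_Iic] at h
  rw [h, measure_univ, stdNormalCDF,
    ENNReal.toReal_sub_of_le prob_le_one (by simp), ENNReal.toReal_one]

theorem DS_LD_rate
    (μ₁ μ₂ σ₁ σ₂ p : ℝ) (hμ : μ₂ < μ₁) (hσ₁ : 0 < σ₁) (hσ₂ : 0 < σ₂)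
    (hp₀ : 0 < p) (hp₁ : p < 1) (δ : ℝ) (hδ : δ = μ₁ - μ₂) :
    Tendsto (fun T : ℕ => -((1 / (T : ℝ)) * Real.log (PFSds δ σ₁ σ₂ p T)))
      atTop (nhds (δ ^ 2 / (2 * (σ₁ ^ 2 / p + σ₂ ^ 2 / (1 - p))))) := by
  have hδpos : 0 < δ := by rw [hδ]; linarith
  have hp₁' : 0 < 1 - p := by linarith
  set c : ℝ := (Real.sqrt (2*π))⁻¹ with hc
  have hcpos : 0 < c := by positivity
  set a : ℕ → ℝ := fun T => δ / Real.sqrt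
      (σ₁ ^ 2 / (⌊p * (T : ℝ)⌋₊ : ℝ) + σ₂ ^ 2 / (⌊(1 - p) * (T : ℝ)⌋₊ : ℝ)) with ha
  have hanon : ∀ T, 0 ≤ a T := fun T => div_nonneg hδpos.le (Real.sqrt_nonneg _)
  set D : ℝ := σ₁ ^ 2 / p + σ₂ ^ 2 / (1 - p) with hD
  have hDpos : 0 < D := by positivity
  set L : ℝ := δ ^ 2 / (2 * D) with hL
  have hLpos : 0 < L := by positivity
  -- floor ratios
  have h1 : Tendsto (fun T : ℕ => (⌊p*(T:ℝ)⌋₊ : ℝ)/(T:ℝ)) atTop (nhds p) :=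
    (tendsto_nat_floor_mul_div_atTop hp₀.le).comp tendsto_natCast_atTop_atTop
  have h2 : Tendsto (fun T : ℕ => (⌊(1-p)*(T:ℝ)⌋₊ : ℝ)/(T:ℝ)) atTop (nhds (1-p)) :=
    (tendsto_nat_floor_mul_div_atTop hp₁'.le).comp tendsto_natCast_atTop_atTop
  have hr : Tendsto (fun T : ℕ => σ₁^2/((⌊p*(T:ℝ)⌋₊:ℝ)/(T:ℝ))
      + σ₂^2/((⌊(1-p)*(T:ℝ)⌋₊:ℝ)/(T:ℝ))) atTop (nhds D) :=
    (Tendsto.div tendsto_const_nhds h1 hp₀.ne').add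
      (Tendsto.div tendsto_const_nhds h2 hp₁'.ne')
  -- eventual positivity of floors
  have hE1 : ∀ᶠ T : ℕ in atTop, (1:ℝ) ≤ (⌊p*(T:ℝ)⌋₊ : ℝ) := by
    filter_upwards [(tendsto_nat_floor_mul_atTop (α := ℝ) p hp₀).eventually_ge_atTop 1]
      with T hT
    exact_mod_cast hT
  have hE2 : ∀ᶠ T : ℕ in atTop, (1:ℝ) ≤ (⌊(1-p)*(T:ℝ)⌋₊ : ℝ) := by
    filter_upwards [(tendsto_nat_floor_mul_atTop (α := ℝ) (1-p) hp₁').eventually_ge_atTop 1]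
      with T hT
    exact_mod_cast hT
  have hE3 : ∀ᶠ T : ℕ in atTop, (1:ℝ) ≤ (T:ℝ) := by
    filter_upwards [eventually_ge_atTop 1] with T hT
    exact_mod_cast hT
  -- q T = a T ^ 2 / T tends to 2 L
  have hEq : ∀ᶠ T : ℕ in atTop, (a T)^2/(T:ℝ)
      = δ^2 / (σ₁^2/((⌊p*(T:ℝ)⌋₊:ℝ)/(T:ℝ)) + σ₂^2/((⌊(1-p)*(T:ℝ)⌋₊:ℝ)/(T:ℝ))) := by
    filter_upwards [hE1, hE2, hE3] with T hm1 hm2 hT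
    set m1 : ℝ := (⌊p*(T:ℝ)⌋₊ : ℝ)
    set m2 : ℝ := (⌊(1-p)*(T:ℝ)⌋₊ : ℝ)
    have hm1' : 0 < m1 := lt_of_lt_of_le one_pos hm1
    have hm2' : 0 < m2 := lt_of_lt_of_le one_pos hm2
    have hT' : 0 < (T:ℝ) := lt_of_lt_of_le one_pos hT
    have hs : 0 < σ₁^2/m1 + σ₂^2/m2 := by positivity
    simp only [ha, div_pow, Real.sq_sqrt (show (0:ℝ) ≤ σ₁^2/(⌊p*(T:ℝ)⌋₊:ℝ) + σ₂^2/(⌊(1-p)*(T:ℝ)⌋₊:ℝ) from hs.le)]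
    show δ^2 / (σ₁^2/m1 + σ₂^2/m2) / (T:ℝ) = δ^2 / (σ₁^2/(m1/(T:ℝ)) + σ₂^2/(m2/(T:ℝ)))
    field_simp
  have hq : Tendsto (fun T : ℕ => (a T)^2/(T:ℝ)) atTop (nhds (2*L)) := by
    have h2L : (2:ℝ)*L = δ^2/D := by rw [hL]; field_simp
    rw [h2L]
    exact (Tendsto.div tendsto_const_nhds hr hDpos.ne').congr'
      (hEq.mono fun T h => h.symm)
  -- eventually a T ≥ 1
  have ha1 : ∀ᶠ T : ℕ in atTop, (1:ℝ) ≤ a T := by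
    have hge : ∀ᶠ T : ℕ in atTop, L ≤ (a T)^2/(T:ℝ) :=
      hq.eventually (eventually_ge_nhds (by linarith))
    have hgeT : ∀ᶠ T : ℕ in atTop, 1/L ≤ (T:ℝ) :=
      tendsto_natCast_atTop_atTop.eventually_ge_atTop (1/L)
    filter_upwards [hge, hgeT, hE3] with T hq1 hq2 hT
    have hT' : 0 < (T:ℝ) := lt_of_lt_of_le one_pos hT
    have h1 : L * (T:ℝ) ≤ (a T)^2 := (le_div_iff₀ hT').mp hq1
    have h2 : (1:ℝ) ≤ (a T)^2 := by
      have : L * (1/L) ≤ L * (T:ℝ) := by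
        apply mul_le_mul_of_nonneg_left hq2 hLpos.le
      rw [mul_one_div, div_self hLpos.ne'] at this
      linarith
    nlinarith [hanon T]
  -- PFS identification and bounds
  have hPFS : ∀ T : ℕ, PFSds δ σ₁ σ₂ p T = ((gaussianReal 0 1) (Set.Ioi (a T))).toReal := by
    intro T
    rw [PFSds, aux_one_sub_cdf]
  have hub : ∀ᶠ T : ℕ in atTop, PFSds δ σ₁ σ₂ p T ≤ Real.exp (-(a T)^2/2) := by
    filter_upwards [ha1] with T hT
    rw [hPFS T]
    exact aux_gauss_tail_le hT
  have hlb : ∀ᶠ T : ℕ in atTop,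
      c * Real.exp (-(a T + 1)^2/2) ≤ PFSds δ σ₁ σ₂ p T := by
    filter_upwards [] with T
    rw [hPFS T]
    exact aux_le_gauss_tail (hanon T)
  -- squeeze sequences
  set f : ℕ → ℝ := fun T => -((1 / (T : ℝ)) * Real.log (PFSds δ σ₁ σ₂ p T)) with hf
  set glow : ℕ → ℝ := fun T => ((a T)^2/(T:ℝ))/2 with hglow
  set ghigh : ℕ → ℝ := fun T => ((a T)^2/(T:ℝ))/2
    + Real.sqrt (((a T)^2/(T:ℝ)) * (1/(T:ℝ))) + (1/2)*(1/(T:ℝ))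
    + (-Real.log c)*(1/(T:ℝ)) with hghigh
  have hT0 : Tendsto (fun T : ℕ => 1/(T:ℝ)) atTop (nhds 0) :=
    tendsto_one_div_atTop_nhds_zero_nat
  have hlowT : Tendsto glow atTop (nhds L) := by
    have := hq.div_const 2
    rw [show 2*L/2 = L by ring] at this
    exact this
  have hhighT : Tendsto ghigh atTop (nhds L) := by
    have hs : Tendsto (fun T : ℕ => Real.sqrt (((a T)^2/(T:ℝ)) * (1/(T:ℝ))))
        atTop (nhds 0) := by
      have := (hq.mul hT0).sqrt
      rw [mul_zero, Real.sqrt_zero] at this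
      exact this
    have := ((hlowT.add hs).add (hT0.const_mul (1/2))).add (hT0.const_mul (-Real.log c))
    rw [mul_zero, mul_zero, add_zero, add_zero, add_zero] at this
    exact this
  have hlow_le : ∀ᶠ T : ℕ in atTop, glow T ≤ f T := by
    filter_upwards [hub, hlb, hE3, ha1] with T hu hl hT _
    have hT' : 0 < (T:ℝ) := lt_of_lt_of_le one_pos hT
    have hPos : 0 < PFSds δ σ₁ σ₂ p T := lt_of_lt_of_le (by positivity) hl
    have hlog : Real.log (PFSds δ σ₁ σ₂ p T) ≤ -(a T)^2/2 := by
      calc Real.log (PFSds δ σ₁ σ₂ p T) ≤ Real.log (Real.exp (-(a T)^2/2)) :=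
            Real.log_le_log hPos hu
        _ = -(a T)^2/2 := Real.log_exp _
    calc (a T)^2/(T:ℝ)/2 = (1/(T:ℝ)) * ((a T)^2/2) := by ring
      _ ≤ (1/(T:ℝ)) * (-Real.log (PFSds δ σ₁ σ₂ p T)) :=
          mul_le_mul_of_nonneg_left (by linarith) (by positivity)
      _ = -(1/(T:ℝ) * Real.log (PFSds δ σ₁ σ₂ p T)) := by ring
  have hhigh_le : ∀ᶠ T : ℕ in atTop, f T ≤ ghigh T := by
    filter_upwards [hlb, hE3] with T hl hT
    have hT' : 0 < (T:ℝ) := lt_of_lt_of_le one_pos hT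
    have hPos : 0 < PFSds δ σ₁ σ₂ p T := lt_of_lt_of_le (by positivity) hl
    have hlog : Real.log c + (-(a T + 1)^2/2) ≤ Real.log (PFSds δ σ₁ σ₂ p T) := by
      calc Real.log c + (-(a T + 1)^2/2)
          = Real.log (c * Real.exp (-(a T + 1)^2/2)) := by
            rw [Real.log_mul hcpos.ne' (Real.exp_pos _).ne', Real.log_exp]
        _ ≤ _ := Real.log_le_log (by positivity) hl
    have hsqrt : Real.sqrt (((a T)^2/(T:ℝ)) * (1/(T:ℝ))) = a T / (T:ℝ) := by
      rw [show ((a T)^2/(T:ℝ)) * (1/(T:ℝ)) = (a T / (T:ℝ))^2 by ring]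
      exact Real.sqrt_sq (by positivity)
    simp only [hf, hghigh, hsqrt]
    have key : -((1/(T:ℝ)) * Real.log (PFSds δ σ₁ σ₂ p T))
        ≤ (1/(T:ℝ)) * ((a T + 1)^2/2 - Real.log c) := by
      rw [neg_le, ← mul_neg]
      apply mul_le_mul_of_nonneg_left _ (by positivity)
      linarith
    refine le_trans key (le_of_eq ?_)
    ring
  have := tendsto_of_tendsto_of_tendsto_of_le_of_le' hlowT hhighT hlow_le hhigh_le
  exact this
end

section
/- For every p ∈ (0,1), sup_{σ₁ > 0, σ₂ > 0} ( σ₁²/p + σ₂²/(1−p) ) / (σ₁ + σ₂)² = max{ 1/p, 1/(1−p) }. Moreover, inf_{p ∈ (0,1)} max{ 1/p, 1/(1−p) } = 2, attained uniquely at p = 1/2; hence equal allocation p = 1/2 solves the robust optimization problem inf_{p∈(0,1)} sup_{σ₁,σ₂>0} (σ₁²/p + σ₂²/(1−p))/(σ₁+σ₂)², i.e., it minimizes the worst-case ratio between the optimal static large deviations rate δ²/(2(σ₁+σ₂)²) and the static rate δ²/(2(σ₁²/p + σ₂²/(1−p))). -/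
open Real

private lemma approx_lem (q : ℝ) (hq : 0 < q) (ε : ℝ) (hε : 0 < ε) :
    ∃ t > (0:ℝ), 1 / q - ε < (1 / q) / (1 + t) ^ 2 := by
  refine ⟨min 1 (ε * q / 3), by positivity, ?_⟩
  set t := min 1 (ε * q / 3) with ht
  have ht0 : 0 < t := by positivity
  have ht1 : t ≤ 1 := min_le_left _ _
  have ht2 : t ≤ ε * q / 3 := min_le_right _ _
  have h1 : (0:ℝ) < (1 + t) ^ 2 := by positivity
  rw [lt_div_iff₀ h1]
  have key : (1 - ε * q) * (1 + t) ^ 2 < 1 := by nlinarith [mul_pos hε hq, sq_nonneg t]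
  have hid : (1 / q - ε) * (1 + t) ^ 2 = (1 / q) * ((1 - ε * q) * (1 + t) ^ 2) := by
    field_simp
  rw [hid]
  calc (1 / q) * ((1 - ε * q) * (1 + t) ^ 2) < (1 / q) * 1 := by
        exact mul_lt_mul_of_pos_left key (by positivity)
    _ = 1 / q := mul_one _

theorem equal_allocation_robust
    : (∀ p ∈ Set.Ioo (0 : ℝ) 1,
        sSup {r : ℝ | ∃ σ₁ > (0 : ℝ), ∃ σ₂ > (0 : ℝ),
            r = (σ₁ ^ 2 / p + σ₂ ^ 2 / (1 - p)) / (σ₁ + σ₂) ^ 2} =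
          max (1 / p) (1 / (1 - p))) ∧
      (∀ p ∈ Set.Ioo (0 : ℝ) 1, 2 ≤ max (1 / p) (1 / (1 - p))) ∧
      max (1 / (1 / 2 : ℝ)) (1 / (1 - (1 / 2 : ℝ))) = 2 ∧
      ∀ p ∈ Set.Ioo (0 : ℝ) 1, max (1 / p) (1 / (1 - p)) = 2 → p = 1 / 2 := by
  refine ⟨?_, ?_, by norm_num, ?_⟩
  · rintro p ⟨hp0, hp1⟩
    have h1p : 0 < 1 - p := by linarith
    set S := {r : ℝ | ∃ σ₁ > (0 : ℝ), ∃ σ₂ > (0 : ℝ),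
            r = (σ₁ ^ 2 / p + σ₂ ^ 2 / (1 - p)) / (σ₁ + σ₂) ^ 2} with hS
    set M := max (1 / p) (1 / (1 - p)) with hM
    have hMp : 1 / p ≤ M := le_max_left _ _
    have hM1p : 1 / (1 - p) ≤ M := le_max_right _ _
    have hub : ∀ r ∈ S, r ≤ M := by
      rintro r ⟨σ₁, hσ₁, σ₂, hσ₂, rfl⟩
      have hden : (0:ℝ) < (σ₁ + σ₂) ^ 2 := by positivity
      rw [div_le_iff₀ hden]
      have e1 : σ₁ ^ 2 / p = σ₁ ^ 2 * (1 / p) := by ring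
      have e2 : σ₂ ^ 2 / (1 - p) = σ₂ ^ 2 * (1 / (1 - p)) := by ring
      rw [e1, e2]
      nlinarith [mul_le_mul_of_nonneg_left hMp (sq_nonneg σ₁),
        mul_le_mul_of_nonneg_left hM1p (sq_nonneg σ₂),
        mul_pos hσ₁ hσ₂, sq_nonneg (σ₁ + σ₂),
        mul_nonneg (mul_pos hσ₁ hσ₂).le (le_trans (by positivity) hMp)]
    have hne : S.Nonempty := ⟨_, 1, one_pos, 1, one_pos, rfl⟩
    have hbdd : BddAbove S := ⟨M, hub⟩
    refine le_antisymm (csSup_le hne hub) ?_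
    rw [Real.le_sSup_iff hbdd hne]
    intro ε hε
    rcases max_cases (1 / p) (1 / (1 - p)) with ⟨hmc, hge⟩ | ⟨hmc, hge⟩
    · -- M = 1/p : take σ₁ = 1, σ₂ = t small
      obtain ⟨t, ht0, hlt⟩ := approx_lem p hp0 (-ε) (by linarith)
      refine ⟨(1 ^ 2 / p + t ^ 2 / (1 - p)) / (1 + t) ^ 2,
        ⟨1, one_pos, t, ht0, rfl⟩, ?_⟩
      have hden : (0:ℝ) < (1 + t) ^ 2 := by positivity
      have hle : (1 / p) / (1 + t) ^ 2 ≤ (1 ^ 2 / p + t ^ 2 / (1 - p)) / (1 + t) ^ 2 := by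
        gcongr
        have : (0:ℝ) ≤ t ^ 2 / (1 - p) := by positivity
        linarith [le_refl (1 / p)]
      calc M + ε = 1 / p + ε := by rw [hM, hmc]
        _ < (1 / p) / (1 + t) ^ 2 := by linarith
        _ ≤ _ := hle
    · -- M = 1/(1-p) : take σ₁ = t small, σ₂ = 1
      obtain ⟨t, ht0, hlt⟩ := approx_lem (1 - p) h1p (-ε) (by linarith)
      refine ⟨(t ^ 2 / p + 1 ^ 2 / (1 - p)) / (t + 1) ^ 2,
        ⟨t, ht0, 1, one_pos, rfl⟩, ?_⟩
      have hden : (0:ℝ) < (t + 1) ^ 2 := by positivity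
      have hle : (1 / (1 - p)) / (t + 1) ^ 2 ≤ (t ^ 2 / p + 1 ^ 2 / (1 - p)) / (t + 1) ^ 2 := by
        gcongr
        have : (0:ℝ) ≤ t ^ 2 / p := by positivity
        linarith [le_refl (1 / (1 - p))]
      have hcomm : (1 + t) ^ 2 = (t + 1) ^ 2 := by ring
      rw [hcomm] at hlt
      calc M + ε = 1 / (1 - p) + ε := by rw [hM, hmc]
        _ < (1 / (1 - p)) / (t + 1) ^ 2 := by linarith
        _ ≤ _ := hle
  · rintro p ⟨hp0, hp1⟩
    rcases le_total p (1/2) with h | h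
    · exact le_trans (by rw [le_div_iff₀ hp0]; linarith) (le_max_left _ _)
    · exact le_trans (by rw [le_div_iff₀ (by linarith : (0:ℝ) < 1 - p)]; linarith) (le_max_right _ _)
  · rintro p ⟨hp0, hp1⟩ hmax
    have h1 : 1 / p ≤ 2 := hmax ▸ le_max_left _ _
    have h2 : 1 / (1 - p) ≤ 2 := hmax ▸ le_max_right _ _
    rw [div_le_iff₀ hp0] at h1
    rw [div_le_iff₀ (by linarith : (0:ℝ) < 1 - p)] at h2
    linarith
end
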